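/- Let S_1 be the set of valid Logical Algorithms states of program P and S_2 = {chrToLa(σ) | ⟨G,∅,true,∅⟩_1 →*_{ω_p,T(P)} σ, G ∈ S_1}. Turn both transition systems into labeled transition systems: an LA transition σ →_P σ' gets label σ' \ σ; a CHR^rp transition σ →_{T(P)} σ' gets label chrToLa(σ') \ chrToLa(σ) if this set is nonempty and the silent label τ otherwise. Then the equality relation between S_1 and S_2 is a weak bisimulation: whenever p = q and p makes a transition labeled α, q can match it by a sequence of silent transitions, one α-labeled transition, and further silent transitions, reaching a state equal to the successor of p, and symmetrically. -/

import Mathlib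

namespace LA2CHR

/-- Mode indicators: positively asserted (`p`), negatively asserted (`n`), or both (`b`). -/
inductive Mode : Type
  | p | n | b
deriving DecidableEq

/-- CHR constraints of the translated program `T(P)`: for each ground user-defined
LA atom `a`, `raw a` is the CHR constraint `a(X̄)`, `rawDel a` is `del(a(X̄))`, and
`rep a m` is the representation constraint `a_r(X̄, m)` with mode indicator `m`. -/
inductive TC (α : Type) : Type
  | raw : α → TC α
  | rawDel : α → TC α
  | rep : α → Mode → TC α
deriving DecidableEq

/-- Ground Logical Algorithms assertions: positive (`pos a` is `a`) or
negative (`del a` is `del(a)`). -/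
inductive LAAtom (α : Type) : Type
  | pos : α → LAAtom α
  | del : α → LAAtom α
deriving DecidableEq

/-- A ground instance of a Logical Algorithms rule, with the comparison antecedents
already evaluated away: a ground instance belongs to the program iff its comparisons
are true.  `posA` are the (distinct) positive user-defined ground antecedents, `negA`
the atoms of the negative (`del`) antecedents, `concl` the instantiated conclusion and
`prio` the instantiated rule priority. -/
structure Inst (α : Type) where
  prio : ℕ
  posA : Finset α
  negA : Finset α
  concl : Finset (LAAtom α)

variable {α : Type}

/-- Applicability of a ground rule instance of `P` in an LA state
(the priority condition is not included). -/
def LAApplicable (P : Set (Inst α)) (σ : Set (LAAtom α)) (ι : Inst α) : Prop :=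
  ι ∈ P ∧ (∀ a ∈ ι.posA, LAAtom.pos a ∈ σ ∧ LAAtom.del a ∉ σ) ∧
    (∀ a ∈ ι.negA, LAAtom.del a ∈ σ) ∧ ¬ ↑ι.concl ⊆ σ

/-- The `Apply` transition of Logical Algorithms: a highest-priority applicable ground
rule instance whose conclusion is not yet contained in the state fires. -/
def LAStep (P : Set (Inst α)) (σ σ' : Set (LAAtom α)) : Prop :=
  ∃ ι, LAApplicable P σ ι ∧ σ' = σ ∪ ↑ι.concl ∧
    ∀ ι', LAApplicable P σ ι' → ι.prio ≤ ι'.prio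

/-- Names of the rules of the translated CHR^rp program `T(P)`: the six
set/deletion-semantics rule schemas (for all user-defined predicates at once,
instantiated per ground atom), and one propagation rule per ground LA rule instance
(the ground collapse of the rules `r_ρ`). -/
inductive RuleTag (α : Type) : Type
  | keepPos | mergePos | newPos | keepNeg | mergeNeg | newNeg
  | inst : Inst α → RuleTag α

/-- Rule priorities of `T(P)`: the update rules have priority 1, the rules creating a
fresh representation have priority 2, and the translation of an LA rule of priority
`p` has priority `p + 2`. -/
def RuleTag.prio : RuleTag α → ℕ
  | .keepPos => 1
  | .mergePos => 1
  | .keepNeg => 1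
  | .mergeNeg => 1
  | .newPos => 2
  | .newNeg => 2
  | .inst ι => ι.prio + 2

/-- CHR^rp execution states `⟨G, S, true, T⟩_n`: goal, CHR constraint store of
identified constraints, propagation history (recording a rule together with the set of
identified constraints it fired on) and next free identifier.  As the translated
program has no built-in tell constraints, the built-in store is always `true` and is
omitted. -/
structure CState (α : Type) where
  goal : Multiset (TC α)
  store : Set (TC α × ℕ)
  hist : Set (RuleTag α × Set (TC α × ℕ))
  next : ℕ

/-- Conclusion atoms as CHR constraints. -/
def toTC : LAAtom α → TC α
  | .pos a => .raw a
  | .del a => .rawDel a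

/-- `Fires P χ t H R B`: rule `t` of `T(P)` has an instance in state `χ` matching the
set `H` of identified stored head constraints, of which the ones in `R` are removed,
with instantiated body `B`.  This comprises all conditions of the ω_p `Apply`
transition except the empty-goal, propagation-history and priority conditions. -/
inductive Fires (P : Set (Inst α)) (χ : CState α) :
    RuleTag α → Set (TC α × ℕ) → Set (TC α × ℕ) → Multiset (TC α) → Prop
  | keepPos (a : α) (m : Mode) (i j : ℕ) : m ≠ Mode.n →
      (TC.rep a m, i) ∈ χ.store → (TC.raw a, j) ∈ χ.store →
      Fires P χ .keepPos {(TC.rep a m, i), (TC.raw a, j)} {(TC.raw a, j)} 0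
  | mergePos (a : α) (i j : ℕ) :
      (TC.rep a Mode.n, i) ∈ χ.store → (TC.raw a, j) ∈ χ.store →
      Fires P χ .mergePos {(TC.rep a Mode.n, i), (TC.raw a, j)}
        {(TC.rep a Mode.n, i), (TC.raw a, j)} {TC.rep a Mode.b}
  | newPos (a : α) (j : ℕ) : (TC.raw a, j) ∈ χ.store →
      Fires P χ .newPos {(TC.raw a, j)} {(TC.raw a, j)} {TC.rep a Mode.p}
  | keepNeg (a : α) (m : Mode) (i j : ℕ) : m ≠ Mode.p →
      (TC.rep a m, i) ∈ χ.store → (TC.rawDel a, j) ∈ χ.store →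
      Fires P χ .keepNeg {(TC.rep a m, i), (TC.rawDel a, j)} {(TC.rawDel a, j)} 0
  | mergeNeg (a : α) (i j : ℕ) :
      (TC.rep a Mode.p, i) ∈ χ.store → (TC.rawDel a, j) ∈ χ.store →
      Fires P χ .mergeNeg {(TC.rep a Mode.p, i), (TC.rawDel a, j)}
        {(TC.rep a Mode.p, i), (TC.rawDel a, j)} {TC.rep a Mode.b}
  | newNeg (a : α) (j : ℕ) : (TC.rawDel a, j) ∈ χ.store →
      Fires P χ .newNeg {(TC.rawDel a, j)} {(TC.rawDel a, j)} {TC.rep a Mode.n}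
  | inst (ι : Inst α) (fp fn : α → ℕ) (fm : α → Mode) : ι ∈ P →
      (∀ a ∈ ι.posA, (TC.rep a Mode.p, fp a) ∈ χ.store) →
      (∀ a ∈ ι.negA, fm a ≠ Mode.p ∧ (TC.rep a (fm a), fn a) ∈ χ.store) →
      Fires P χ (.inst ι)
        ((fun a => (TC.rep a Mode.p, fp a)) '' ↑ι.posA ∪
          (fun a => (TC.rep a (fm a), fn a)) '' ↑ι.negA)
        ∅ (Multiset.map toTC ι.concl.val)

/-- Transition labels: `Introduce`, or `Apply` of a given rule of `T(P)`. -/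
inductive Lab (α : Type) : Type
  | intro : Lab α
  | apply : RuleTag α → Lab α

variable [DecidableEq α]

/-- The transitions of the priority semantics ω_p for the translated program `T(P)`:
`Introduce` moves a constraint from the goal to the store with a fresh identifier;
`Apply` (possible only when the goal is empty) fires an instance of a rule whose
history tuple is not yet recorded and such that no fireable rule instance has a
strictly higher priority. -/
inductive Step (P : Set (Inst α)) : CState α → Lab α → CState α → Prop
  | intro (χ : CState α) (c : TC α) : c ∈ χ.goal →
      Step P χ .intro ⟨χ.goal.erase c, insert (c, χ.next) χ.store, χ.hist, χ.next + 1⟩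
  | apply (χ : CState α) (t : RuleTag α) (H R : Set (TC α × ℕ)) (B : Multiset (TC α)) :
      χ.goal = 0 → Fires P χ t H R B → (t, H) ∉ χ.hist →
      (∀ t' H' R' B', Fires P χ t' H' R' B' → (t', H') ∉ χ.hist →
        RuleTag.prio t ≤ RuleTag.prio t') →
      Step P χ (.apply t) ⟨B, χ.store \ R, insert (t, H) χ.hist, χ.next⟩

/-- Some ω_p transition. -/
def StepAny (P : Set (Inst α)) (χ χ' : CState α) : Prop := ∃ l, Step P χ l χ'

/-- An ω_p transition that is an `Introduce` or fires a rule of priority 1 or 2. -/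
def Step2 (P : Set (Inst α)) (χ χ' : CState α) : Prop :=
  ∃ l, Step P χ l χ' ∧ ∀ t, l = Lab.apply t → RuleTag.prio t ≤ 2

/-- Membership in `A = G ∪ chr(S)`. -/
def memA (χ : CState α) (c : TC α) : Prop := c ∈ χ.goal ∨ ∃ i, (c, i) ∈ χ.store

/-- The mapping from (reachable) CHR^rp execution states of `T(P)` to LA states. -/
def chrToLa (χ : CState α) : Set (LAAtom α) :=
  {x | (∃ a, x = LAAtom.pos a ∧
          (memA χ (TC.raw a) ∨ ∃ m, m ≠ Mode.n ∧ memA χ (TC.rep a m))) ∨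
       (∃ a, x = LAAtom.del a ∧
          (memA χ (TC.rawDel a) ∨ ∃ m, m ≠ Mode.p ∧ memA χ (TC.rep a m)))}

/-- Initial states `⟨G, ∅, true, ∅⟩_n` where the goal `G` contains only constraints of
the forms `a(X̄)` and `del(a(X̄))` (no `a_r` constraints). -/
def Init (χ : CState α) : Prop :=
  (∀ c ∈ χ.goal, ∃ a, c = TC.raw a ∨ c = TC.rawDel a) ∧ χ.store = ∅ ∧ χ.hist = ∅

/-- Reachability (w.r.t. ω_p and program `T(P)`) from an initial state. -/
def Reachable (P : Set (Inst α)) (χ : CState α) : Prop :=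
  ∃ χ₀, Init χ₀ ∧ Relation.ReflTransGen (StepAny P) χ₀ χ

/-- Pre-normal form: empty goal, the store contains only `a_r(X̄, M)` constraints, and
two stored representations of the same atom have the same identifier. -/
def PreNormal (χ : CState α) : Prop :=
  χ.goal = 0 ∧ (∀ c ∈ χ.store, ∃ a m, c.1 = TC.rep a m) ∧
  ∀ a m₁ m₂ i₁ i₂, (TC.rep a m₁, i₁) ∈ χ.store → (TC.rep a m₂, i₂) ∈ χ.store → i₁ = i₂

/-- A rule instance is implied in a state `σ` if its conclusion is contained in
`chrToLa σ`. -/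
def Implied (ι : Inst α) (χ : CState α) : Prop := ↑ι.concl ⊆ chrToLa χ

end LA2CHR

namespace LA2CHR

variable {α : Type} [DecidableEq α]

/-- The labeled transition system of Logical Algorithms: a transition `σ → σ'` of `P`
is labeled by the state change `σ' \ σ` (labels are `Option`s, `none` being the silent
label τ; LA transitions are never silent). -/
def LaLts (P : Set (Inst α)) (σ : Set (LAAtom α)) (l : Option (Set (LAAtom α)))
    (σ' : Set (LAAtom α)) : Prop :=
  LAStep P σ σ' ∧ l = some (σ' \ σ)

/-- The labeled transition system induced on `chrToLa`-images of reachable CHR^rp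
states of `T(P)`: a CHR^rp transition `σ → σ'` yields a transition from `chrToLa σ` to
`chrToLa σ'` labeled `chrToLa σ' \ chrToLa σ` if this set is nonempty, and the silent
label τ (`none`) otherwise. -/
def ChrLts (P : Set (Inst α)) (q : Set (LAAtom α)) (l : Option (Set (LAAtom α)))
    (q' : Set (LAAtom α)) : Prop :=
  ∃ χ χ', Reachable P χ ∧ StepAny P χ χ' ∧ chrToLa χ = q ∧ chrToLa χ' = q' ∧
    (chrToLa χ' \ chrToLa χ = ∅ → l = none) ∧
    (chrToLa χ' \ chrToLa χ ≠ ∅ → l = some (chrToLa χ' \ chrToLa χ))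

/-- Silent (τ-labeled) transitions of an LTS. -/
def Tau {St L : Type*} (T : St → Option L → St → Prop) : St → St → Prop :=
  fun s s' => T s none s'

/-- `R` is a weak bisimulation between the LTSs `T₁` and `T₂`: whenever `p R q` and
`p` makes a transition labeled `α`, `q` can match it — by a sequence of silent
transitions, one `α`-labeled transition, and further silent transitions if `α` is
visible, and by a sequence of silent transitions if `α` is the silent label τ —
reaching a state related to the successor of `p`; and symmetrically. -/
def IsWeakBisim {St₁ St₂ L : Type*} (T₁ : St₁ → Option L → St₁ → Prop)
    (T₂ : St₂ → Option L → St₂ → Prop) (R : St₁ → St₂ → Prop) : Prop :=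
  (∀ p q p', R p q → Tau T₁ p p' →
    ∃ q', Relation.ReflTransGen (Tau T₂) q q' ∧ R p' q') ∧
  (∀ p q p' a, R p q → T₁ p (some a) p' →
    ∃ q₁ q₂ q', Relation.ReflTransGen (Tau T₂) q q₁ ∧ T₂ q₁ (some a) q₂ ∧
      Relation.ReflTransGen (Tau T₂) q₂ q' ∧ R p' q') ∧
  (∀ p q q', R p q → Tau T₂ q q' →
    ∃ p', Relation.ReflTransGen (Tau T₁) p p' ∧ R p' q') ∧
  (∀ p q q' a, R p q → T₂ q (some a) q' →
    ∃ p₁ p₂ p', Relation.ReflTransGen (Tau T₁) p p₁ ∧ T₁ p₁ (some a) p₂ ∧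
      Relation.ReflTransGen (Tau T₁) p₂ p' ∧ R p' q')

end LA2CHR

set_option linter.unusedSectionVars false

namespace LA2CHR

variable {α : Type} [DecidableEq α]

/-! ### Basic membership lemmas -/

theorem mem_chrToLa_pos {χ : CState α} {a : α} :
    LAAtom.pos a ∈ chrToLa χ ↔
      (memA χ (TC.raw a) ∨ ∃ m, m ≠ Mode.n ∧ memA χ (TC.rep a m)) := by
  simp [chrToLa]

theorem mem_chrToLa_del {χ : CState α} {a : α} :
    LAAtom.del a ∈ chrToLa χ ↔
      (memA χ (TC.rawDel a) ∨ ∃ m, m ≠ Mode.p ∧ memA χ (TC.rep a m)) := by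
  simp [chrToLa]

theorem memA_goal0 {χ : CState α} (hg : χ.goal = 0) {d : TC α} :
    memA χ d ↔ ∃ i, (d, i) ∈ χ.store := by
  simp [memA, hg]

theorem memA_apply {B : Multiset (TC α)} {S R : Set (TC α × ℕ)}
    {h : Set (RuleTag α × Set (TC α × ℕ))} {n : ℕ} {d : TC α} :
    memA (⟨B, S \ R, h, n⟩ : CState α) d ↔ d ∈ B ∨ ∃ i, (d, i) ∈ S ∧ (d, i) ∉ R := by
  simp [memA, Set.mem_diff]

theorem memA_intro {χ : CState α} {c : TC α} (hc : c ∈ χ.goal) {d : TC α} :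
    memA (⟨χ.goal.erase c, insert (c, χ.next) χ.store, χ.hist, χ.next + 1⟩ : CState α) d
      ↔ memA χ d := by
  constructor
  · rintro (h | ⟨i, h⟩)
    · exact Or.inl (Multiset.mem_of_mem_erase h)
    · rcases Set.mem_insert_iff.1 h with h | h
      · obtain ⟨rfl, -⟩ : d = c ∧ i = χ.next := Prod.ext_iff.1 h
        exact Or.inl hc
      · exact Or.inr ⟨i, h⟩
  · rintro (h | ⟨i, h⟩)
    · by_cases hdc : d = c
      · exact Or.inr ⟨χ.next, Set.mem_insert_iff.2 (Or.inl (by rw [hdc]))⟩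
      · exact Or.inl (Multiset.mem_erase_of_ne hdc |>.2 h)
    · exact Or.inr ⟨i, Set.mem_insert_iff.2 (Or.inr h)⟩

theorem chrToLa_congr {χ χ' : CState α} (h : ∀ c, memA χ c ↔ memA χ' c) :
    chrToLa χ = chrToLa χ' := by
  ext x
  cases x with
  | pos a => simp [mem_chrToLa_pos, h]
  | del a => simp [mem_chrToLa_del, h]

end LA2CHR

namespace LA2CHR

variable {α : Type} [DecidableEq α]

theorem toTC_eq_raw {y : LAAtom α} {b : α} : toTC y = TC.raw b ↔ y = LAAtom.pos b := by
  cases y <;> simp [toTC]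

theorem toTC_eq_rawDel {y : LAAtom α} {b : α} : toTC y = TC.rawDel b ↔ y = LAAtom.del b := by
  cases y <;> simp [toTC]

theorem toTC_ne_rep {y : LAAtom α} {b : α} {m : Mode} : toTC y ≠ TC.rep b m := by
  cases y <;> simp [toTC]

theorem memA_apply_elim {χ : CState α} {B : Multiset (TC α)} {R : Set (TC α × ℕ)}
    {h : Set (RuleTag α × Set (TC α × ℕ))} {n : ℕ} {d : TC α}
    (hd : memA (⟨B, χ.store \ R, h, n⟩ : CState α) d) : d ∈ B ∨ memA χ d := by
  rcases hd with h' | ⟨i, h'⟩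
  · exact Or.inl h'
  · exact Or.inr (Or.inr ⟨i, h'.1⟩)

theorem memA_apply_of_store {χ : CState α} {B : Multiset (TC α)} {R : Set (TC α × ℕ)}
    {h : Set (RuleTag α × Set (TC α × ℕ))} {n : ℕ} {d : TC α} {i : ℕ}
    (hd : (d, i) ∈ χ.store) (hR : (d, i) ∉ R) :
    memA (⟨B, χ.store \ R, h, n⟩ : CState α) d := Or.inr ⟨i, hd, hR⟩

theorem memA_apply_of_goal {χ : CState α} {B : Multiset (TC α)} {R : Set (TC α × ℕ)}
    {h : Set (RuleTag α × Set (TC α × ℕ))} {n : ℕ} {d : TC α}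
    (hd : d ∈ B) : memA (⟨B, χ.store \ R, h, n⟩ : CState α) d := Or.inl hd

theorem memA_of_store {χ : CState α} {d : TC α} {i : ℕ} (h : (d, i) ∈ χ.store) :
    memA χ d := Or.inr ⟨i, h⟩

theorem image_step_small {P : Set (Inst α)} {χ χ' : CState α} {l : Lab α}
    (hs : Step P χ l χ') (hl : ∀ ι, l ≠ Lab.apply (RuleTag.inst ι)) :
    chrToLa χ' = chrToLa χ := by
  cases hs with
  | intro c hc => exact chrToLa_congr fun d => memA_intro hc
  | apply t H R B hg hf hh hp =>
    cases hf with
    | inst ι fp fn fm => exact absurd rfl (hl ι)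
    | keepPos a m i j hm hrep hraw =>
      apply Set.Subset.antisymm
      · intro x hx
        cases x with
        | pos b =>
          rw [mem_chrToLa_pos] at hx ⊢
          rcases hx with h | ⟨m', hm', h⟩
          · rcases memA_apply_elim h with h | h
            · exact absurd h (Multiset.notMem_zero _)
            · exact Or.inl h
          · rcases memA_apply_elim h with h | h
            · exact absurd h (Multiset.notMem_zero _)
            · exact Or.inr ⟨m', hm', h⟩
        | del b =>
          rw [mem_chrToLa_del] at hx ⊢
          rcases hx with h | ⟨m', hm', h⟩
          · rcases memA_apply_elim h with h | h
            · exact absurd h (Multiset.notMem_zero _)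
            · exact Or.inl h
          · rcases memA_apply_elim h with h | h
            · exact absurd h (Multiset.notMem_zero _)
            · exact Or.inr ⟨m', hm', h⟩
      · intro x hx
        cases x with
        | pos b =>
          rw [mem_chrToLa_pos] at hx ⊢
          rcases hx with h | ⟨m', hm', h⟩
          · obtain ⟨i', hi⟩ := (memA_goal0 hg).1 h
            by_cases hba : b = a
            · subst hba
              exact Or.inr ⟨m, hm, memA_apply_of_store hrep (by simp)⟩
            · exact Or.inl (memA_apply_of_store hi (by simp [hba]))
          · obtain ⟨i', hi⟩ := (memA_goal0 hg).1 h
            exact Or.inr ⟨m', hm', memA_apply_of_store hi (by simp)⟩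
        | del b =>
          rw [mem_chrToLa_del] at hx ⊢
          rcases hx with h | ⟨m', hm', h⟩
          · obtain ⟨i', hi⟩ := (memA_goal0 hg).1 h
            exact Or.inl (memA_apply_of_store hi (by simp))
          · obtain ⟨i', hi⟩ := (memA_goal0 hg).1 h
            exact Or.inr ⟨m', hm', memA_apply_of_store hi (by simp)⟩
    | mergePos a i j hrep hraw =>
      apply Set.Subset.antisymm
      · intro x hx
        cases x with
        | pos b =>
          rw [mem_chrToLa_pos] at hx ⊢
          rcases hx with h | ⟨m', hm', h⟩
          · rcases memA_apply_elim h with h | h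
            · exact absurd (Multiset.mem_singleton.1 h) (by simp)
            · exact Or.inl h
          · rcases memA_apply_elim h with h | h
            · obtain ⟨rfl, -⟩ : b = a ∧ m' = Mode.b := by
                have := Multiset.mem_singleton.1 h
                exact ⟨by injection this, by injection this⟩
              exact Or.inl (memA_of_store hraw)
            · exact Or.inr ⟨m', hm', h⟩
        | del b =>
          rw [mem_chrToLa_del] at hx ⊢
          rcases hx with h | ⟨m', hm', h⟩
          · rcases memA_apply_elim h with h | h
            · exact absurd (Multiset.mem_singleton.1 h) (by simp)
            · exact Or.inl h
          · rcases memA_apply_elim h with h | h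
            · obtain rfl : b = a := by injection (Multiset.mem_singleton.1 h)
              exact Or.inr ⟨Mode.n, by simp, memA_of_store hrep⟩
            · exact Or.inr ⟨m', hm', h⟩
      · intro x hx
        cases x with
        | pos b =>
          rw [mem_chrToLa_pos] at hx ⊢
          rcases hx with h | ⟨m', hm', h⟩
          · by_cases hba : b = a
            · subst hba
              exact Or.inr ⟨Mode.b, by simp, memA_apply_of_goal (Multiset.mem_singleton.2 rfl)⟩
            · obtain ⟨i', hi⟩ := (memA_goal0 hg).1 h
              exact Or.inl (memA_apply_of_store hi (by simp [hba]))
          · obtain ⟨i', hi⟩ := (memA_goal0 hg).1 h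
            by_cases hba : b = a
            · subst hba
              exact Or.inr ⟨Mode.b, by simp, memA_apply_of_goal (Multiset.mem_singleton.2 rfl)⟩
            · exact Or.inr ⟨m', hm', memA_apply_of_store hi (by simp [hba])⟩
        | del b =>
          rw [mem_chrToLa_del] at hx ⊢
          rcases hx with h | ⟨m', hm', h⟩
          · obtain ⟨i', hi⟩ := (memA_goal0 hg).1 h
            exact Or.inl (memA_apply_of_store hi (by simp))
          · obtain ⟨i', hi⟩ := (memA_goal0 hg).1 h
            by_cases hba : b = a
            · subst hba
              exact Or.inr ⟨Mode.b, by simp, memA_apply_of_goal (Multiset.mem_singleton.2 rfl)⟩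
            · exact Or.inr ⟨m', hm', memA_apply_of_store hi (by simp [hba])⟩
    | newPos a j hraw =>
      apply Set.Subset.antisymm
      · intro x hx
        cases x with
        | pos b =>
          rw [mem_chrToLa_pos] at hx ⊢
          rcases hx with h | ⟨m', hm', h⟩
          · rcases memA_apply_elim h with h | h
            · exact absurd (Multiset.mem_singleton.1 h) (by simp)
            · exact Or.inl h
          · rcases memA_apply_elim h with h | h
            · obtain rfl : b = a := by injection (Multiset.mem_singleton.1 h)
              exact Or.inl (memA_of_store hraw)
            · exact Or.inr ⟨m', hm', h⟩
        | del b =>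
          rw [mem_chrToLa_del] at hx ⊢
          rcases hx with h | ⟨m', hm', h⟩
          · rcases memA_apply_elim h with h | h
            · exact absurd (Multiset.mem_singleton.1 h) (by simp)
            · exact Or.inl h
          · rcases memA_apply_elim h with h | h
            · obtain ⟨-, hmp⟩ : b = a ∧ m' = Mode.p := by
                have := Multiset.mem_singleton.1 h
                exact ⟨by injection this, by injection this⟩
              exact absurd hmp hm'
            · exact Or.inr ⟨m', hm', h⟩
      · intro x hx
        cases x with
        | pos b =>
          rw [mem_chrToLa_pos] at hx ⊢
          rcases hx with h | ⟨m', hm', h⟩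
          · by_cases hba : b = a
            · subst hba
              exact Or.inr ⟨Mode.p, by simp, memA_apply_of_goal (Multiset.mem_singleton.2 rfl)⟩
            · obtain ⟨i', hi⟩ := (memA_goal0 hg).1 h
              exact Or.inl (memA_apply_of_store hi (by simp [hba]))
          · obtain ⟨i', hi⟩ := (memA_goal0 hg).1 h
            exact Or.inr ⟨m', hm', memA_apply_of_store hi (by simp)⟩
        | del b =>
          rw [mem_chrToLa_del] at hx ⊢
          rcases hx with h | ⟨m', hm', h⟩
          · obtain ⟨i', hi⟩ := (memA_goal0 hg).1 h
            exact Or.inl (memA_apply_of_store hi (by simp))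
          · obtain ⟨i', hi⟩ := (memA_goal0 hg).1 h
            exact Or.inr ⟨m', hm', memA_apply_of_store hi (by simp)⟩
    | keepNeg a m i j hm hrep hraw =>
      apply Set.Subset.antisymm
      · intro x hx
        cases x with
        | pos b =>
          rw [mem_chrToLa_pos] at hx ⊢
          rcases hx with h | ⟨m', hm', h⟩
          · rcases memA_apply_elim h with h | h
            · exact absurd h (Multiset.notMem_zero _)
            · exact Or.inl h
          · rcases memA_apply_elim h with h | h
            · exact absurd h (Multiset.notMem_zero _)
            · exact Or.inr ⟨m', hm', h⟩
        | del b =>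
          rw [mem_chrToLa_del] at hx ⊢
          rcases hx with h | ⟨m', hm', h⟩
          · rcases memA_apply_elim h with h | h
            · exact absurd h (Multiset.notMem_zero _)
            · exact Or.inl h
          · rcases memA_apply_elim h with h | h
            · exact absurd h (Multiset.notMem_zero _)
            · exact Or.inr ⟨m', hm', h⟩
      · intro x hx
        cases x with
        | pos b =>
          rw [mem_chrToLa_pos] at hx ⊢
          rcases hx with h | ⟨m', hm', h⟩
          · obtain ⟨i', hi⟩ := (memA_goal0 hg).1 h
            exact Or.inl (memA_apply_of_store hi (by simp))
          · obtain ⟨i', hi⟩ := (memA_goal0 hg).1 h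
            exact Or.inr ⟨m', hm', memA_apply_of_store hi (by simp)⟩
        | del b =>
          rw [mem_chrToLa_del] at hx ⊢
          rcases hx with h | ⟨m', hm', h⟩
          · obtain ⟨i', hi⟩ := (memA_goal0 hg).1 h
            by_cases hba : b = a
            · subst hba
              exact Or.inr ⟨m, hm, memA_apply_of_store hrep (by simp)⟩
            · exact Or.inl (memA_apply_of_store hi (by simp [hba]))
          · obtain ⟨i', hi⟩ := (memA_goal0 hg).1 h
            exact Or.inr ⟨m', hm', memA_apply_of_store hi (by simp)⟩
    | mergeNeg a i j hrep hraw =>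
      apply Set.Subset.antisymm
      · intro x hx
        cases x with
        | pos b =>
          rw [mem_chrToLa_pos] at hx ⊢
          rcases hx with h | ⟨m', hm', h⟩
          · rcases memA_apply_elim h with h | h
            · exact absurd (Multiset.mem_singleton.1 h) (by simp)
            · exact Or.inl h
          · rcases memA_apply_elim h with h | h
            · obtain rfl : b = a := by injection (Multiset.mem_singleton.1 h)
              exact Or.inr ⟨Mode.p, by simp, memA_of_store hrep⟩
            · exact Or.inr ⟨m', hm', h⟩
        | del b =>
          rw [mem_chrToLa_del] at hx ⊢
          rcases hx with h | ⟨m', hm', h⟩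
          · rcases memA_apply_elim h with h | h
            · exact absurd (Multiset.mem_singleton.1 h) (by simp)
            · exact Or.inl h
          · rcases memA_apply_elim h with h | h
            · obtain rfl : b = a := by injection (Multiset.mem_singleton.1 h)
              exact Or.inl (memA_of_store hraw)
            · exact Or.inr ⟨m', hm', h⟩
      · intro x hx
        cases x with
        | pos b =>
          rw [mem_chrToLa_pos] at hx ⊢
          rcases hx with h | ⟨m', hm', h⟩
          · obtain ⟨i', hi⟩ := (memA_goal0 hg).1 h
            exact Or.inl (memA_apply_of_store hi (by simp))
          · obtain ⟨i', hi⟩ := (memA_goal0 hg).1 h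
            by_cases hba : b = a
            · subst hba
              exact Or.inr ⟨Mode.b, by simp, memA_apply_of_goal (Multiset.mem_singleton.2 rfl)⟩
            · exact Or.inr ⟨m', hm', memA_apply_of_store hi (by simp [hba])⟩
        | del b =>
          rw [mem_chrToLa_del] at hx ⊢
          rcases hx with h | ⟨m', hm', h⟩
          · by_cases hba : b = a
            · subst hba
              exact Or.inr ⟨Mode.b, by simp, memA_apply_of_goal (Multiset.mem_singleton.2 rfl)⟩
            · obtain ⟨i', hi⟩ := (memA_goal0 hg).1 h
              exact Or.inl (memA_apply_of_store hi (by simp [hba]))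
          · obtain ⟨i', hi⟩ := (memA_goal0 hg).1 h
            by_cases hba : b = a
            · subst hba
              exact Or.inr ⟨Mode.b, by simp, memA_apply_of_goal (Multiset.mem_singleton.2 rfl)⟩
            · exact Or.inr ⟨m', hm', memA_apply_of_store hi (by simp [hba])⟩
    | newNeg a j hraw =>
      apply Set.Subset.antisymm
      · intro x hx
        cases x with
        | pos b =>
          rw [mem_chrToLa_pos] at hx ⊢
          rcases hx with h | ⟨m', hm', h⟩
          · rcases memA_apply_elim h with h | h
            · exact absurd (Multiset.mem_singleton.1 h) (by simp)
            · exact Or.inl h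
          · rcases memA_apply_elim h with h | h
            · obtain ⟨-, hmn⟩ : b = a ∧ m' = Mode.n := by
                have := Multiset.mem_singleton.1 h
                exact ⟨by injection this, by injection this⟩
              exact absurd hmn hm'
            · exact Or.inr ⟨m', hm', h⟩
        | del b =>
          rw [mem_chrToLa_del] at hx ⊢
          rcases hx with h | ⟨m', hm', h⟩
          · rcases memA_apply_elim h with h | h
            · exact absurd (Multiset.mem_singleton.1 h) (by simp)
            · exact Or.inl h
          · rcases memA_apply_elim h with h | h
            · obtain rfl : b = a := by injection (Multiset.mem_singleton.1 h)
              exact Or.inl (memA_of_store hraw)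
            · exact Or.inr ⟨m', hm', h⟩
      · intro x hx
        cases x with
        | pos b =>
          rw [mem_chrToLa_pos] at hx ⊢
          rcases hx with h | ⟨m', hm', h⟩
          · obtain ⟨i', hi⟩ := (memA_goal0 hg).1 h
            exact Or.inl (memA_apply_of_store hi (by simp))
          · obtain ⟨i', hi⟩ := (memA_goal0 hg).1 h
            exact Or.inr ⟨m', hm', memA_apply_of_store hi (by simp)⟩
        | del b =>
          rw [mem_chrToLa_del] at hx ⊢
          rcases hx with h | ⟨m', hm', h⟩
          · by_cases hba : b = a
            · subst hba
              exact Or.inr ⟨Mode.n, by simp, memA_apply_of_goal (Multiset.mem_singleton.2 rfl)⟩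
            · obtain ⟨i', hi⟩ := (memA_goal0 hg).1 h
              exact Or.inl (memA_apply_of_store hi (by simp [hba]))
          · obtain ⟨i', hi⟩ := (memA_goal0 hg).1 h
            exact Or.inr ⟨m', hm', memA_apply_of_store hi (by simp)⟩

theorem image_step_inst {P : Set (Inst α)} {χ χ' : CState α} {ι : Inst α}
    (hs : Step P χ (Lab.apply (RuleTag.inst ι)) χ') :
    chrToLa χ' = chrToLa χ ∪ ↑ι.concl := by
  cases hs with
  | apply t H R B hg hf hh hp =>
    cases hf with
    | inst ι fp fn fm hP hpos hneg =>
      apply Set.Subset.antisymm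
      · intro x hx
        cases x with
        | pos b =>
          rw [mem_chrToLa_pos] at hx
          rcases hx with h | ⟨m', hm', h⟩
          · rcases memA_apply_elim h with h | h
            · obtain ⟨y, hy, hty⟩ := Multiset.mem_map.1 h
              rw [toTC_eq_raw] at hty
              subst hty
              exact Or.inr (Finset.mem_coe.2 (Finset.mem_def.2 hy))
            · exact Or.inl (mem_chrToLa_pos.2 (Or.inl h))
          · rcases memA_apply_elim h with h | h
            · obtain ⟨y, -, hty⟩ := Multiset.mem_map.1 h
              exact absurd hty toTC_ne_rep
            · exact Or.inl (mem_chrToLa_pos.2 (Or.inr ⟨m', hm', h⟩))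
        | del b =>
          rw [mem_chrToLa_del] at hx
          rcases hx with h | ⟨m', hm', h⟩
          · rcases memA_apply_elim h with h | h
            · obtain ⟨y, hy, hty⟩ := Multiset.mem_map.1 h
              rw [toTC_eq_rawDel] at hty
              subst hty
              exact Or.inr (Finset.mem_coe.2 (Finset.mem_def.2 hy))
            · exact Or.inl (mem_chrToLa_del.2 (Or.inl h))
          · rcases memA_apply_elim h with h | h
            · obtain ⟨y, -, hty⟩ := Multiset.mem_map.1 h
              exact absurd hty toTC_ne_rep
            · exact Or.inl (mem_chrToLa_del.2 (Or.inr ⟨m', hm', h⟩))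
      · intro x hx
        rcases hx with hx | hx
        · cases x with
          | pos b =>
            rw [mem_chrToLa_pos] at hx ⊢
            rcases hx with h | ⟨m', hm', h⟩
            · obtain ⟨i', hi⟩ := (memA_goal0 hg).1 h
              exact Or.inl (memA_apply_of_store hi (Set.notMem_empty _))
            · obtain ⟨i', hi⟩ := (memA_goal0 hg).1 h
              exact Or.inr ⟨m', hm', memA_apply_of_store hi (Set.notMem_empty _)⟩
          | del b =>
            rw [mem_chrToLa_del] at hx ⊢
            rcases hx with h | ⟨m', hm', h⟩
            · obtain ⟨i', hi⟩ := (memA_goal0 hg).1 h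
              exact Or.inl (memA_apply_of_store hi (Set.notMem_empty _))
            · obtain ⟨i', hi⟩ := (memA_goal0 hg).1 h
              exact Or.inr ⟨m', hm', memA_apply_of_store hi (Set.notMem_empty _)⟩
        · cases x with
          | pos b =>
            refine mem_chrToLa_pos.2 (Or.inl (memA_apply_of_goal ?_))
            exact Multiset.mem_map.2 ⟨LAAtom.pos b, Finset.mem_def.1 (Finset.mem_coe.1 hx), rfl⟩
          | del b =>
            refine mem_chrToLa_del.2 (Or.inl (memA_apply_of_goal ?_))
            exact Multiset.mem_map.2 ⟨LAAtom.del b, Finset.mem_def.1 (Finset.mem_coe.1 hx), rfl⟩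

theorem image_mono {P : Set (Inst α)} {χ χ' : CState α} {l : Lab α}
    (hs : Step P χ l χ') : chrToLa χ ⊆ chrToLa χ' := by
  rcases l with _ | t
  · rw [image_step_small hs (by simp)]
  · cases t with
    | inst ι => rw [image_step_inst hs]; exact Set.subset_union_left
    | keepPos => rw [image_step_small hs (by simp)]
    | mergePos => rw [image_step_small hs (by simp)]
    | newPos => rw [image_step_small hs (by simp)]
    | keepNeg => rw [image_step_small hs (by simp)]
    | mergeNeg => rw [image_step_small hs (by simp)]
    | newNeg => rw [image_step_small hs (by simp)]

end LA2CHR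

namespace LA2CHR

variable {α : Type} [DecidableEq α]

/-- `c` is a `raw` or `rawDel` constraint. -/
def RawOf : TC α → Prop := fun c => (∃ a, c = TC.raw a) ∨ (∃ a, c = TC.rawDel a)

instance : DecidablePred (RawOf (α := α)) := fun c =>
  match c with
  | .raw a => isTrue (Or.inl ⟨a, rfl⟩)
  | .rawDel a => isTrue (Or.inr ⟨a, rfl⟩)
  | .rep a m => isFalse (by rintro (⟨b, h⟩ | ⟨b, h⟩) <;> cases h)

/-- `c` is a representation constraint for atom `a`. -/
def RepOf (a : α) : TC α → Prop := fun c => ∃ m, c = TC.rep a m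

instance (a : α) : DecidablePred (RepOf a) := fun c =>
  match c with
  | .raw b => isFalse (by rintro ⟨m, h⟩; cases h)
  | .rawDel b => isFalse (by rintro ⟨m, h⟩; cases h)
  | .rep b m =>
      if h : b = a then isTrue ⟨m, by rw [h]⟩
      else isFalse (by rintro ⟨m', hm⟩; injection hm; simp_all)

/-- The key invariant of reachable states. -/
structure Inv (χ : CState α) : Prop where
  fin : χ.store.Finite
  idS : ∀ c i, (c, i) ∈ χ.store → i < χ.next
  idH : ∀ t (H : Set (TC α × ℕ)) c i, (t, H) ∈ χ.hist → (c, i) ∈ H → i < χ.next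
  u1 : ∀ a m i m' i', (TC.rep a m, i) ∈ χ.store → (TC.rep a m', i') ∈ χ.store →
        m = m' ∧ i = i'
  u2 : ∀ a m, TC.rep a m ∈ χ.goal → ∀ m' i', (TC.rep a m', i') ∉ χ.store
  u3 : ∀ a, χ.goal.countP (RepOf a) ≤ 1
  hC : ∀ ι (H : Set (TC α × ℕ)), (RuleTag.inst ι, H) ∈ χ.hist → ↑ι.concl ⊆ chrToLa χ
  hRes : ∀ t (H : Set (TC α × ℕ)) c i, (t, H) ∈ χ.hist → (c, i) ∈ H → RawOf c →
        (c, i) ∉ χ.store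

theorem pair_eq {β γ : Type*} {a c : β} {b d : γ} (h : (a, b) = (c, d)) :
    a = c ∧ b = d := by
  injection h with h1 h2
  exact ⟨h1, h2⟩

theorem fires_H_sub {P : Set (Inst α)} {χ : CState α} {t : RuleTag α}
    {H R : Set (TC α × ℕ)} {B : Multiset (TC α)} (hf : Fires P χ t H R B) :
    H ⊆ χ.store := by
  cases hf with
  | keepPos a m i j hm hrep hraw =>
    intro x hx
    simp only [Set.mem_insert_iff, Set.mem_singleton_iff] at hx
    rcases hx with rfl | rfl
    exacts [hrep, hraw]
  | mergePos a i j hrep hraw =>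
    intro x hx
    simp only [Set.mem_insert_iff, Set.mem_singleton_iff] at hx
    rcases hx with rfl | rfl
    exacts [hrep, hraw]
  | newPos a j hraw =>
    intro x hx
    simp only [Set.mem_singleton_iff] at hx
    subst hx; exact hraw
  | keepNeg a m i j hm hrep hraw =>
    intro x hx
    simp only [Set.mem_insert_iff, Set.mem_singleton_iff] at hx
    rcases hx with rfl | rfl
    exacts [hrep, hraw]
  | mergeNeg a i j hrep hraw =>
    intro x hx
    simp only [Set.mem_insert_iff, Set.mem_singleton_iff] at hx
    rcases hx with rfl | rfl
    exacts [hrep, hraw]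
  | newNeg a j hraw =>
    intro x hx
    simp only [Set.mem_singleton_iff] at hx
    subst hx; exact hraw
  | inst ι fp fn fm hP hpos hneg =>
    intro x hx
    rcases hx with ⟨a, ha, rfl⟩ | ⟨a, ha, rfl⟩
    · exact hpos a (Finset.mem_coe.1 ha)
    · exact (hneg a (Finset.mem_coe.1 ha)).2

theorem mem_chrToLa_of_goal {χ : CState α} {y : LAAtom α} (h : toTC y ∈ χ.goal) :
    y ∈ chrToLa χ := by
  cases y with
  | pos a => exact mem_chrToLa_pos.2 (Or.inl (Or.inl h))
  | del a => exact mem_chrToLa_del.2 (Or.inl (Or.inl h))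

theorem inv_step {P : Set (Inst α)} {χ χ' : CState α} {l : Lab α}
    (hs : Step P χ l χ') (hv : Inv χ) : Inv χ' := by
  have hmono : chrToLa χ ⊆ chrToLa χ' := image_mono hs
  cases hs with
  | intro c hc =>
    refine ⟨hv.fin.insert _, ?_, ?_, ?_, ?_, ?_, ?_, ?_⟩
    · rintro d i (h | h)
      · obtain ⟨-, rfl⟩ := pair_eq h
        exact Nat.lt_succ_self _
      · exact Nat.lt_succ_of_lt (hv.idS d i h)
    · intro t H d i ht hd
      exact Nat.lt_succ_of_lt (hv.idH t H d i ht hd)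
    · rintro a m i m' i' (h1 | h1) (h2 | h2)
      · obtain ⟨hc1, hi1⟩ := pair_eq h1
        obtain ⟨hc2, hi2⟩ := pair_eq h2
        rw [← hc2] at hc1
        injection hc1 with ha hm
        exact ⟨hm, by rw [hi1, hi2]⟩
      · obtain ⟨hc1, -⟩ := pair_eq h1
        exact absurd h2 (hv.u2 a m (by rw [hc1]; exact hc) m' i')
      · obtain ⟨hc2, -⟩ := pair_eq h2
        exact absurd h1 (hv.u2 a m' (by rw [hc2]; exact hc) m i)
      · exact hv.u1 a m i m' i' h1 h2
    · intro a m hm m' i' hmem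
      have hgm : TC.rep a m ∈ χ.goal := Multiset.mem_of_mem_erase hm
      rcases hmem with h | h
      · obtain ⟨hc1, -⟩ := pair_eq h
        have hrc : RepOf a c := ⟨m', by rw [hc1]⟩
        have h3 := hv.u3 a
        rw [← Multiset.cons_erase hc, Multiset.countP_cons] at h3
        simp only [hrc, if_true] at h3
        have : 0 < (χ.goal.erase c).countP (RepOf a) :=
          Multiset.countP_pos.2 ⟨TC.rep a m, hm, ⟨m, rfl⟩⟩
        omega
      · exact hv.u2 a m hgm m' i' h
    · intro a
      exact le_trans (Multiset.countP_le_of_le _ (Multiset.erase_le c χ.goal)) (hv.u3 a)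
    · intro ι H ht
      exact (hv.hC ι H ht).trans hmono
    · intro t H d i ht hd hraw
      rintro (h | h)
      · obtain ⟨-, hi⟩ := pair_eq h
        exact absurd hi (Nat.ne_of_lt (hv.idH t H d i ht hd))
      · exact hv.hRes t H d i ht hd hraw h
  | apply t H R B hg hf hh hp =>
    have hHsub : H ⊆ χ.store := fires_H_sub hf
    refine ⟨hv.fin.diff, ?_, ?_, ?_, ?_, ?_, ?_, ?_⟩
    · intro d i h
      exact hv.idS d i h.1
    · intro t' H' d i ht hd
      rcases Set.mem_insert_iff.1 ht with h | h
      · obtain ⟨-, hH⟩ := pair_eq h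
        exact hv.idS d i (hHsub (by rw [hH] at hd; exact hd))
      · exact hv.idH t' H' d i h hd
    · intro a m i m' i' h1 h2
      exact hv.u1 a m i m' i' h1.1 h2.1
    · -- u2
      intro a m hm m' i' hmem
      cases hf with
      | keepPos a' m'' i'' j hm'' hrep hraw => exact absurd hm (Multiset.notMem_zero _)
      | keepNeg a' m'' i'' j hm'' hrep hraw => exact absurd hm (Multiset.notMem_zero _)
      | mergePos a' i'' j hrep hraw =>
        obtain ⟨rfl, -⟩ : a = a' ∧ m = Mode.b := by
          have := Multiset.mem_singleton.1 hm
          injection this with h1 h2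
          exact ⟨h1, h2⟩
        have := hv.u1 a m' i' Mode.n i'' hmem.1 hrep
        refine hmem.2 ?_
        simp [← this.1, ← this.2]
      | mergeNeg a' i'' j hrep hraw =>
        obtain ⟨rfl, -⟩ : a = a' ∧ m = Mode.b := by
          have := Multiset.mem_singleton.1 hm
          injection this with h1 h2
          exact ⟨h1, h2⟩
        have := hv.u1 a m' i' Mode.p i'' hmem.1 hrep
        refine hmem.2 ?_
        simp [← this.1, ← this.2]
      | newPos a' j hraw =>
        obtain ⟨rfl, -⟩ : a = a' ∧ m = Mode.p := by
          have := Multiset.mem_singleton.1 hm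
          injection this with h1 h2
          exact ⟨h1, h2⟩
        have hrep : (TC.rep a m', i') ∈ χ.store := hmem.1
        by_cases hmn : m' = Mode.n
        · subst hmn
          have hfresh : (RuleTag.mergePos,
              ({(TC.rep a Mode.n, i'), (TC.raw a, j)} : Set (TC α × ℕ))) ∉ χ.hist := by
            intro hmem'
            exact hv.hRes _ _ (TC.raw a) j hmem' (Set.mem_insert_iff.2 (Or.inr rfl))
              (Or.inl ⟨a, rfl⟩) hraw
          have := hp _ _ _ _ (Fires.mergePos a i' j hrep hraw) hfresh
          simp [RuleTag.prio] at this
        · have hfresh : (RuleTag.keepPos,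
              ({(TC.rep a m', i'), (TC.raw a, j)} : Set (TC α × ℕ))) ∉ χ.hist := by
            intro hmem'
            exact hv.hRes _ _ (TC.raw a) j hmem' (Set.mem_insert_iff.2 (Or.inr rfl))
              (Or.inl ⟨a, rfl⟩) hraw
          have := hp _ _ _ _ (Fires.keepPos a m' i' j hmn hrep hraw) hfresh
          simp [RuleTag.prio] at this
      | newNeg a' j hraw =>
        obtain ⟨rfl, -⟩ : a = a' ∧ m = Mode.n := by
          have := Multiset.mem_singleton.1 hm
          injection this with h1 h2
          exact ⟨h1, h2⟩
        have hrep : (TC.rep a m', i') ∈ χ.store := hmem.1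
        by_cases hmp : m' = Mode.p
        · subst hmp
          have hfresh : (RuleTag.mergeNeg,
              ({(TC.rep a Mode.p, i'), (TC.rawDel a, j)} : Set (TC α × ℕ))) ∉ χ.hist := by
            intro hmem'
            exact hv.hRes _ _ (TC.rawDel a) j hmem' (Set.mem_insert_iff.2 (Or.inr rfl))
              (Or.inr ⟨a, rfl⟩) hraw
          have := hp _ _ _ _ (Fires.mergeNeg a i' j hrep hraw) hfresh
          simp [RuleTag.prio] at this
        · have hfresh : (RuleTag.keepNeg,
              ({(TC.rep a m', i'), (TC.rawDel a, j)} : Set (TC α × ℕ))) ∉ χ.hist := by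
            intro hmem'
            exact hv.hRes _ _ (TC.rawDel a) j hmem' (Set.mem_insert_iff.2 (Or.inr rfl))
              (Or.inr ⟨a, rfl⟩) hraw
          have := hp _ _ _ _ (Fires.keepNeg a m' i' j hmp hrep hraw) hfresh
          simp [RuleTag.prio] at this
      | inst ι fp fn fm hP hpos hneg =>
        obtain ⟨y, -, hty⟩ := Multiset.mem_map.1 hm
        exact absurd hty toTC_ne_rep
    · -- u3
      intro a
      cases hf with
      | keepPos a' m'' i'' j hm'' hrep hraw => simp
      | keepNeg a' m'' i'' j hm'' hrep hraw => simp
      | mergePos a' i'' j hrep hraw =>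
        rw [show ({TC.rep a' Mode.b} : Multiset (TC α)) = TC.rep a' Mode.b ::ₘ 0 from rfl,
          Multiset.countP_cons, Multiset.countP_zero]
        split <;> omega
      | mergeNeg a' i'' j hrep hraw =>
        rw [show ({TC.rep a' Mode.b} : Multiset (TC α)) = TC.rep a' Mode.b ::ₘ 0 from rfl,
          Multiset.countP_cons, Multiset.countP_zero]
        split <;> omega
      | newPos a' j hraw =>
        rw [show ({TC.rep a' Mode.p} : Multiset (TC α)) = TC.rep a' Mode.p ::ₘ 0 from rfl,
          Multiset.countP_cons, Multiset.countP_zero]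
        split <;> omega
      | newNeg a' j hraw =>
        rw [show ({TC.rep a' Mode.n} : Multiset (TC α)) = TC.rep a' Mode.n ::ₘ 0 from rfl,
          Multiset.countP_cons, Multiset.countP_zero]
        split <;> omega
      | inst ι fp fn fm hP hpos hneg =>
        have : Multiset.countP (RepOf a) (Multiset.map toTC ι.concl.val) = 0 := by
          refine Multiset.countP_eq_zero.2 ?_
          intro x hx
          obtain ⟨y, -, rfl⟩ := Multiset.mem_map.1 hx
          rintro ⟨m, hmx⟩
          exact toTC_ne_rep hmx
        rw [this]; omega
    · -- hC
      intro ι' H' ht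
      rcases Set.mem_insert_iff.1 ht with h | h
      · obtain ⟨h1, h2⟩ := pair_eq h
        cases hf with
        | keepPos a' m'' i'' j hm'' hrep hraw => exact absurd h1 (by simp)
        | keepNeg a' m'' i'' j hm'' hrep hraw => exact absurd h1 (by simp)
        | mergePos a' i'' j hrep hraw => exact absurd h1 (by simp)
        | mergeNeg a' i'' j hrep hraw => exact absurd h1 (by simp)
        | newPos a' j hraw => exact absurd h1 (by simp)
        | newNeg a' j hraw => exact absurd h1 (by simp)
        | inst ι fp fn fm hP hpos hneg =>
          obtain rfl : ι' = ι := by injection h1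
          intro y hy
          refine mem_chrToLa_of_goal ?_
          exact Multiset.mem_map.2 ⟨y, Finset.mem_def.1 (Finset.mem_coe.1 hy), rfl⟩
      · exact (hv.hC ι' H' h).trans hmono
    · -- hRes
      intro t' H' d i ht hd hrawd
      rcases Set.mem_insert_iff.1 ht with h | h
      · obtain ⟨h1, h2⟩ := pair_eq h
        subst h1
        rw [h2] at hd
        intro hmem
        refine hmem.2 ?_
        cases hf with
        | keepPos a' m'' i'' j hm'' hrep hraw =>
          rcases Set.mem_insert_iff.1 hd with h3 | h3
          · obtain ⟨h4, -⟩ := pair_eq h3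
            rw [h4] at hrawd
            rcases hrawd with ⟨b, hb⟩ | ⟨b, hb⟩ <;> cases hb
          · exact h3
        | keepNeg a' m'' i'' j hm'' hrep hraw =>
          rcases Set.mem_insert_iff.1 hd with h3 | h3
          · obtain ⟨h4, -⟩ := pair_eq h3
            rw [h4] at hrawd
            rcases hrawd with ⟨b, hb⟩ | ⟨b, hb⟩ <;> cases hb
          · exact h3
        | mergePos a' i'' j hrep hraw => exact hd
        | mergeNeg a' i'' j hrep hraw => exact hd
        | newPos a' j hraw => exact hd
        | newNeg a' j hraw => exact hd
        | inst ι fp fn fm hP hpos hneg =>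
          rcases hd with ⟨b, -, h3⟩ | ⟨b, -, h3⟩
          · obtain ⟨h4, -⟩ := pair_eq h3.symm
            rw [h4] at hrawd
            rcases hrawd with ⟨b', hb⟩ | ⟨b', hb⟩ <;> cases hb
          · obtain ⟨h4, -⟩ := pair_eq h3.symm
            rw [h4] at hrawd
            rcases hrawd with ⟨b', hb⟩ | ⟨b', hb⟩ <;> cases hb
      · intro hmem
        exact hv.hRes t' H' d i h hd hrawd hmem.1

end LA2CHR

namespace LA2CHR

variable {α : Type} [DecidableEq α]

theorem inv_init {χ : CState α} (h : Init χ) : Inv χ := by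
  obtain ⟨hgoal, hstore, hhist⟩ := h
  refine ⟨?_, ?_, ?_, ?_, ?_, ?_, ?_, ?_⟩
  · rw [hstore]; exact Set.finite_empty
  · intro c i hc; rw [hstore] at hc; exact absurd hc (Set.notMem_empty _)
  · intro t H c i ht; rw [hhist] at ht; exact absurd ht (Set.notMem_empty _)
  · intro a m i m' i' h1; rw [hstore] at h1; exact absurd h1 (Set.notMem_empty _)
  · intro a m hm m' i' h1; rw [hstore] at h1; exact absurd h1 (Set.notMem_empty _)
  · intro a
    have : χ.goal.countP (RepOf a) = 0 := by
      refine Multiset.countP_eq_zero.2 ?_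
      intro c hc
      obtain ⟨b, hb | hb⟩ := hgoal c hc <;> subst hb <;> rintro ⟨m, hm⟩ <;> cases hm
    omega
  · intro ι H ht; rw [hhist] at ht; exact absurd ht (Set.notMem_empty _)
  · intro t H c i ht; rw [hhist] at ht; exact absurd ht (Set.notMem_empty _)

theorem step_hist_mono {P : Set (Inst α)} {χ χ' : CState α} {l : Lab α}
    (hs : Step P χ l χ') : χ.hist ⊆ χ'.hist := by
  cases hs with
  | intro c hc => exact subset_rfl
  | apply t H R B hg hf hh hp => exact Set.subset_insert _ _

theorem inv_rtg {P : Set (Inst α)} {χ χ' : CState α}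
    (h : Relation.ReflTransGen (StepAny P) χ χ') (hv : Inv χ) : Inv χ' := by
  induction h with
  | refl => exact hv
  | tail _ hstep ih =>
    obtain ⟨l, hl⟩ := hstep
    exact inv_step hl ih

theorem inv_reachable {P : Set (Inst α)} {χ : CState α} (h : Reachable P χ) : Inv χ := by
  obtain ⟨χ₀, hinit, hsteps⟩ := h
  exact inv_rtg hsteps (inv_init hinit)

theorem reachable_rtg {P : Set (Inst α)} {χ χ' : CState α}
    (h : Reachable P χ) (h2 : Relation.ReflTransGen (StepAny P) χ χ') : Reachable P χ' := by
  obtain ⟨χ₀, hinit, hsteps⟩ := h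
  exact ⟨χ₀, hinit, hsteps.trans h2⟩

theorem reachable_step {P : Set (Inst α)} {χ χ' : CState α} {l : Lab α}
    (h : Reachable P χ) (h2 : Step P χ l χ') : Reachable P χ' :=
  reachable_rtg h (Relation.ReflTransGen.single ⟨l, h2⟩)

theorem pos_mem_prenormal {χ : CState α} (hpn : PreNormal χ) {a : α} :
    LAAtom.pos a ∈ chrToLa χ ↔ ∃ m i, m ≠ Mode.n ∧ (TC.rep a m, i) ∈ χ.store := by
  rw [mem_chrToLa_pos]
  constructor
  · rintro (h | ⟨m, hm, h⟩)
    · obtain ⟨i, hi⟩ := (memA_goal0 hpn.1).1 h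
      obtain ⟨b, m, hbm⟩ := hpn.2.1 _ hi
      simp at hbm
    · obtain ⟨i, hi⟩ := (memA_goal0 hpn.1).1 h
      exact ⟨m, i, hm, hi⟩
  · rintro ⟨m, i, hm, h⟩
    exact Or.inr ⟨m, hm, memA_of_store h⟩

theorem del_mem_prenormal {χ : CState α} (hpn : PreNormal χ) {a : α} :
    LAAtom.del a ∈ chrToLa χ ↔ ∃ m i, m ≠ Mode.p ∧ (TC.rep a m, i) ∈ χ.store := by
  rw [mem_chrToLa_del]
  constructor
  · rintro (h | ⟨m, hm, h⟩)
    · obtain ⟨i, hi⟩ := (memA_goal0 hpn.1).1 h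
      obtain ⟨b, m, hbm⟩ := hpn.2.1 _ hi
      simp at hbm
    · obtain ⟨i, hi⟩ := (memA_goal0 hpn.1).1 h
      exact ⟨m, i, hm, hi⟩
  · rintro ⟨m, i, hm, h⟩
    exact Or.inr ⟨m, hm, memA_of_store h⟩

/-- raw/rawDel constraints currently in the store. -/
def rawsS (χ : CState α) : Set (TC α × ℕ) := {x ∈ χ.store | RawOf x.1}

theorem rawsS_finite {χ : CState α} (hv : Inv χ) : (rawsS χ).Finite :=
  hv.fin.subset (Set.sep_subset _ _)

/-- Termination measure for normalization. -/
noncomputable def mu (χ : CState α) : ℕ :=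
  2 * (χ.goal.countP RawOf + (rawsS χ).ncard) + Multiset.card χ.goal

theorem one_le_prio (t : RuleTag α) : 1 ≤ t.prio := by
  cases t <;> simp [RuleTag.prio]

end LA2CHR

namespace LA2CHR

variable {α : Type} [DecidableEq α]

theorem mu_intro {χ : CState α} (hv : Inv χ) {c : TC α} (hc : c ∈ χ.goal) :
    mu (⟨χ.goal.erase c, insert (c, χ.next) χ.store, χ.hist, χ.next + 1⟩ : CState α)
      < mu χ := by
  have hfin := rawsS_finite hv
  have hfresh : (c, χ.next) ∉ rawsS χ := fun h => lt_irrefl _ (hv.idS _ _ h.1)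
  have hcount : χ.goal.countP RawOf
      = (χ.goal.erase c).countP RawOf + (if RawOf c then 1 else 0) := by
    conv_lhs => rw [← Multiset.cons_erase hc]
    rw [Multiset.countP_cons]
  have hcard : Multiset.card χ.goal = Multiset.card (χ.goal.erase c) + 1 := by
    conv_lhs => rw [← Multiset.cons_erase hc]
    rw [Multiset.card_cons]
  by_cases hr : RawOf c
  · have hset : rawsS (⟨χ.goal.erase c, insert (c, χ.next) χ.store, χ.hist,
        χ.next + 1⟩ : CState α) = insert (c, χ.next) (rawsS χ) := by
      ext x
      simp only [rawsS, Set.mem_setOf_eq, Set.mem_insert_iff]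
      constructor
      · rintro ⟨rfl | hx, hP⟩
        · exact Or.inl rfl
        · exact Or.inr ⟨hx, hP⟩
      · rintro (rfl | ⟨hx, hP⟩)
        · exact ⟨Or.inl rfl, hr⟩
        · exact ⟨Or.inr hx, hP⟩
    unfold mu
    rw [hset, Set.ncard_insert_of_notMem hfresh hfin]
    simp only [hr, if_true] at hcount
    dsimp only
    omega
  · have hset : rawsS (⟨χ.goal.erase c, insert (c, χ.next) χ.store, χ.hist,
        χ.next + 1⟩ : CState α) = rawsS χ := by
      ext x
      simp only [rawsS, Set.mem_setOf_eq, Set.mem_insert_iff]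
      constructor
      · rintro ⟨rfl | hx, hP⟩
        · exact absurd hP hr
        · exact ⟨hx, hP⟩
      · rintro ⟨hx, hP⟩
        exact ⟨Or.inr hx, hP⟩
    unfold mu
    rw [hset]
    simp only [hr, if_false] at hcount
    dsimp only
    omega

theorem mu_apply {χ : CState α} (hv : Inv χ) (hg : χ.goal = 0) {B : Multiset (TC α)}
    {R : Set (TC α × ℕ)} {h' : Set (RuleTag α × Set (TC α × ℕ))} {n' : ℕ}
    {e : TC α × ℕ} (he : e ∈ χ.store) (heR : e ∈ R) (hrawe : RawOf e.1)
    (hB : Multiset.countP RawOf B = 0) (hBc : Multiset.card B ≤ 1) :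
    mu (⟨B, χ.store \ R, h', n'⟩ : CState α) < mu χ := by
  have hfin := rawsS_finite hv
  have he' : e ∈ rawsS χ := ⟨he, hrawe⟩
  have hset : rawsS (⟨B, χ.store \ R, h', n'⟩ : CState α) = rawsS χ \ R := by
    ext x
    simp only [rawsS, Set.mem_setOf_eq, Set.mem_diff]
    tauto
  have hlt : (rawsS χ \ R).ncard < (rawsS χ).ncard :=
    lt_of_le_of_lt
      (Set.ncard_le_ncard
        (Set.diff_subset_diff_right (Set.singleton_subset_iff.2 heR)) hfin.diff)
      (Set.ncard_diff_singleton_lt_of_mem he' hfin)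
  unfold mu
  rw [hset, hg, hB]
  simp only [Multiset.countP_zero, Multiset.card_zero]
  omega

theorem countP_raw_singleton_rep (a : α) (m : Mode) :
    Multiset.countP RawOf ({TC.rep a m} : Multiset (TC α)) = 0 := by
  refine Multiset.countP_eq_zero.2 ?_
  intro x hx
  rw [Multiset.mem_singleton.1 hx]
  rintro (⟨b, hb⟩ | ⟨b, hb⟩) <;> cases hb

theorem fresh_of_raw_in_store {χ : CState α} (hv : Inv χ) {t : RuleTag α}
    {H : Set (TC α × ℕ)} {c : TC α} {i : ℕ} (h1 : (c, i) ∈ H) (h2 : RawOf c)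
    (h3 : (c, i) ∈ χ.store) : (t, H) ∉ χ.hist :=
  fun hh => hv.hRes t H c i hh h1 h2 h3

theorem normalize (P : Set (Inst α)) : ∀ n (χ : CState α), mu χ ≤ n → Inv χ →
    ∃ χ', Relation.ReflTransGen (StepAny P) χ χ' ∧ chrToLa χ' = chrToLa χ ∧ Inv χ' ∧
      PreNormal χ' ∧ χ.hist ⊆ χ'.hist := by
  intro n
  induction n using Nat.strong_induction_on with
  | _ n ih =>
    intro χ hmu hv
    have key : ∀ (l : Lab α) (χ' : CState α), Step P χ l χ' →
        (∀ ι, l ≠ Lab.apply (RuleTag.inst ι)) → mu χ' < mu χ →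
        ∃ χ'', Relation.ReflTransGen (StepAny P) χ χ'' ∧ chrToLa χ'' = chrToLa χ ∧
          Inv χ'' ∧ PreNormal χ'' ∧ χ.hist ⊆ χ''.hist := by
      intro l χ' hstep hsmall hlt
      have hv' := inv_step hstep hv
      obtain ⟨χ'', hrtg, himg, hv'', hpn, hsub⟩ :=
        ih (mu χ') (lt_of_lt_of_le hlt hmu) χ' le_rfl hv'
      exact ⟨χ'', Relation.ReflTransGen.head ⟨l, hstep⟩ hrtg,
        by rw [himg, image_step_small hstep hsmall], hv'', hpn,
        (step_hist_mono hstep).trans hsub⟩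
    by_cases hg : χ.goal = 0
    · by_cases hA : ∃ a m i j, (TC.rep a m, i) ∈ χ.store ∧ (TC.raw a, j) ∈ χ.store
      · obtain ⟨a, m, i, j, hrep, hraw⟩ := hA
        by_cases hmn : m = Mode.n
        · subst hmn
          refine key _ _ (Step.apply χ .mergePos _ _ _ hg
            (Fires.mergePos a i j hrep hraw)
            (fresh_of_raw_in_store hv (Set.mem_insert_iff.2 (Or.inr rfl))
              (Or.inl ⟨a, rfl⟩) hraw)
            (fun t' _ _ _ _ _ => one_le_prio t')) (by simp) ?_
          exact mu_apply hv hg hraw (Set.mem_insert_iff.2 (Or.inr rfl)) (Or.inl ⟨a, rfl⟩)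
            (countP_raw_singleton_rep a Mode.b) (by simp)
        · refine key _ _ (Step.apply χ .keepPos _ _ _ hg
            (Fires.keepPos a m i j hmn hrep hraw)
            (fresh_of_raw_in_store hv (Set.mem_insert_iff.2 (Or.inr rfl))
              (Or.inl ⟨a, rfl⟩) hraw)
            (fun t' _ _ _ _ _ => one_le_prio t')) (by simp) ?_
          exact mu_apply hv hg hraw rfl (Or.inl ⟨a, rfl⟩) (by simp) (by simp)
      · by_cases hB : ∃ a m i j, (TC.rep a m, i) ∈ χ.store ∧ (TC.rawDel a, j) ∈ χ.store
        · obtain ⟨a, m, i, j, hrep, hraw⟩ := hB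
          by_cases hmp : m = Mode.p
          · subst hmp
            refine key _ _ (Step.apply χ .mergeNeg _ _ _ hg
              (Fires.mergeNeg a i j hrep hraw)
              (fresh_of_raw_in_store hv (Set.mem_insert_iff.2 (Or.inr rfl))
                (Or.inr ⟨a, rfl⟩) hraw)
              (fun t' _ _ _ _ _ => one_le_prio t')) (by simp) ?_
            exact mu_apply hv hg hraw (Set.mem_insert_iff.2 (Or.inr rfl)) (Or.inr ⟨a, rfl⟩)
              (countP_raw_singleton_rep a Mode.b) (by simp)
          · refine key _ _ (Step.apply χ .keepNeg _ _ _ hg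
              (Fires.keepNeg a m i j hmp hrep hraw)
              (fresh_of_raw_in_store hv (Set.mem_insert_iff.2 (Or.inr rfl))
                (Or.inr ⟨a, rfl⟩) hraw)
              (fun t' _ _ _ _ _ => one_le_prio t')) (by simp) ?_
            exact mu_apply hv hg hraw rfl (Or.inr ⟨a, rfl⟩) (by simp) (by simp)
        · have hprio2 : ∀ (t' : RuleTag α) (H' R' : Set (TC α × ℕ)) (B' : Multiset (TC α)),
              Fires P χ t' H' R' B' → (t', H') ∉ χ.hist → 2 ≤ RuleTag.prio t' := by
            intro t' H' R' B' hf' hfr'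
            cases hf' with
            | keepPos a' m' i' j' hm' hrep' hraw' =>
              exact absurd ⟨a', m', i', j', hrep', hraw'⟩ hA
            | mergePos a' i' j' hrep' hraw' =>
              exact absurd ⟨a', Mode.n, i', j', hrep', hraw'⟩ hA
            | keepNeg a' m' i' j' hm' hrep' hraw' =>
              exact absurd ⟨a', m', i', j', hrep', hraw'⟩ hB
            | mergeNeg a' i' j' hrep' hraw' =>
              exact absurd ⟨a', Mode.p, i', j', hrep', hraw'⟩ hB
            | newPos a' j' hraw' => exact le_refl _
            | newNeg a' j' hraw' => exact le_refl _
            | inst ι fp fn fm hP hpos hneg => simp [RuleTag.prio]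
          by_cases h2 : ∃ a j, (TC.raw a, j) ∈ χ.store
          · obtain ⟨a, j, hraw⟩ := h2
            refine key _ _ (Step.apply χ .newPos _ _ _ hg
              (Fires.newPos a j hraw)
              (fresh_of_raw_in_store hv rfl (Or.inl ⟨a, rfl⟩) hraw)
              hprio2) (by simp) ?_
            exact mu_apply hv hg hraw rfl (Or.inl ⟨a, rfl⟩)
              (countP_raw_singleton_rep a Mode.p) (by simp)
          · by_cases h3 : ∃ a j, (TC.rawDel a, j) ∈ χ.store
            · obtain ⟨a, j, hraw⟩ := h3
              refine key _ _ (Step.apply χ .newNeg _ _ _ hg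
                (Fires.newNeg a j hraw)
                (fresh_of_raw_in_store hv rfl (Or.inr ⟨a, rfl⟩) hraw)
                hprio2) (by simp) ?_
              exact mu_apply hv hg hraw rfl (Or.inr ⟨a, rfl⟩)
                (countP_raw_singleton_rep a Mode.n) (by simp)
            · refine ⟨χ, Relation.ReflTransGen.refl, rfl, hv, ⟨hg, ?_, ?_⟩, subset_rfl⟩
              · rintro ⟨d, i⟩ hdi
                cases d with
                | raw a => exact absurd ⟨a, i, hdi⟩ h2
                | rawDel a => exact absurd ⟨a, i, hdi⟩ h3
                | rep a m => exact ⟨a, m, rfl⟩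
              · intro a m₁ m₂ i₁ i₂ h1' h2'
                exact (hv.u1 a m₁ i₁ m₂ i₂ h1' h2').2
    · obtain ⟨c, hc⟩ := Multiset.exists_mem_of_ne_zero hg
      exact key _ _ (Step.intro χ c hc) (by simp) (mu_intro hv hc)

end LA2CHR

namespace LA2CHR

variable {α : Type} [DecidableEq α]

/-- Every raw constraint in goal or store has a matching representation in the store. -/
def Matched (χ : CState α) : Prop :=
  (∀ c ∈ χ.goal, (∃ a, c = TC.raw a ∧ ∃ m i, m ≠ Mode.n ∧ (TC.rep a m, i) ∈ χ.store) ∨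
     (∃ a, c = TC.rawDel a ∧ ∃ m i, m ≠ Mode.p ∧ (TC.rep a m, i) ∈ χ.store)) ∧
  (∀ a j, (TC.raw a, j) ∈ χ.store → ∃ m i, m ≠ Mode.n ∧ (TC.rep a m, i) ∈ χ.store) ∧
  (∀ a j, (TC.rawDel a, j) ∈ χ.store → ∃ m i, m ≠ Mode.p ∧ (TC.rep a m, i) ∈ χ.store)

theorem renorm (P : Set (Inst α)) : ∀ n (χ : CState α), mu χ ≤ n → Inv χ → Matched χ →
    ∃ χ', Relation.ReflTransGen (StepAny P) χ χ' ∧ chrToLa χ' = chrToLa χ ∧ Inv χ' ∧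
      PreNormal χ' ∧ χ.hist ⊆ χ'.hist ∧
      ∀ a m i, ((TC.rep a m, i) ∈ χ'.store ↔ (TC.rep a m, i) ∈ χ.store) := by
  intro n
  induction n using Nat.strong_induction_on with
  | _ n ih =>
    intro χ hmu hv hM
    by_cases hg : χ.goal = 0
    · by_cases h2 : ∃ a j, (TC.raw a, j) ∈ χ.store
      · obtain ⟨a, j, hraw⟩ := h2
        obtain ⟨m, i, hm, hrep⟩ := hM.2.1 a j hraw
        set χ' : CState α := ⟨0, χ.store \ {(TC.raw a, j)},
          insert (RuleTag.keepPos, {(TC.rep a m, i), (TC.raw a, j)}) χ.hist, χ.next⟩ with hχ'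
        have hstep : Step P χ (Lab.apply .keepPos) χ' :=
          Step.apply χ .keepPos _ _ _ hg (Fires.keepPos a m i j hm hrep hraw)
            (fresh_of_raw_in_store hv (Set.mem_insert_iff.2 (Or.inr rfl))
              (Or.inl ⟨a, rfl⟩) hraw)
            (fun t' _ _ _ _ _ => one_le_prio t')
        have hv' := inv_step hstep hv
        have hstore : ∀ b m' i', ((TC.rep b m', i') ∈ χ'.store ↔ (TC.rep b m', i') ∈ χ.store) := by
          intro b m' i'
          constructor
          · exact fun h => h.1
          · intro h
            exact ⟨h, by simp⟩
        have hM' : Matched χ' := by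
          refine ⟨?_, ?_, ?_⟩
          · intro c hc
            exact absurd hc (Multiset.notMem_zero _)
          · intro b j' hb
            obtain ⟨m', i', hm', hrep'⟩ := hM.2.1 b j' hb.1
            exact ⟨m', i', hm', (hstore b m' i').2 hrep'⟩
          · intro b j' hb
            obtain ⟨m', i', hm', hrep'⟩ := hM.2.2 b j' hb.1
            exact ⟨m', i', hm', (hstore b m' i').2 hrep'⟩
        have hlt : mu χ' < mu χ :=
          mu_apply hv hg hraw rfl (Or.inl ⟨a, rfl⟩) (by simp) (by simp)
        obtain ⟨χ'', hrtg, himg, hv'', hpn, hsub, hiff⟩ :=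
          ih (mu χ') (lt_of_lt_of_le hlt hmu) χ' le_rfl hv' hM'
        exact ⟨χ'', Relation.ReflTransGen.head ⟨_, hstep⟩ hrtg,
          by rw [himg, image_step_small hstep (by simp)], hv'', hpn,
          (step_hist_mono hstep).trans hsub,
          fun b m' i' => (hiff b m' i').trans (hstore b m' i')⟩
      · by_cases h3 : ∃ a j, (TC.rawDel a, j) ∈ χ.store
        · obtain ⟨a, j, hraw⟩ := h3
          obtain ⟨m, i, hm, hrep⟩ := hM.2.2 a j hraw
          set χ' : CState α := ⟨0, χ.store \ {(TC.rawDel a, j)},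
            insert (RuleTag.keepNeg, {(TC.rep a m, i), (TC.rawDel a, j)}) χ.hist, χ.next⟩ with hχ'
          have hstep : Step P χ (Lab.apply .keepNeg) χ' :=
            Step.apply χ .keepNeg _ _ _ hg (Fires.keepNeg a m i j hm hrep hraw)
              (fresh_of_raw_in_store hv (Set.mem_insert_iff.2 (Or.inr rfl))
                (Or.inr ⟨a, rfl⟩) hraw)
              (fun t' _ _ _ _ _ => one_le_prio t')
          have hv' := inv_step hstep hv
          have hstore : ∀ b m' i', ((TC.rep b m', i') ∈ χ'.store ↔ (TC.rep b m', i') ∈ χ.store) := by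
            intro b m' i'
            constructor
            · exact fun h => h.1
            · intro h
              exact ⟨h, by simp⟩
          have hM' : Matched χ' := by
            refine ⟨?_, ?_, ?_⟩
            · intro c hc
              exact absurd hc (Multiset.notMem_zero _)
            · intro b j' hb
              obtain ⟨m', i', hm', hrep'⟩ := hM.2.1 b j' hb.1
              exact ⟨m', i', hm', (hstore b m' i').2 hrep'⟩
            · intro b j' hb
              obtain ⟨m', i', hm', hrep'⟩ := hM.2.2 b j' hb.1
              exact ⟨m', i', hm', (hstore b m' i').2 hrep'⟩
          have hlt : mu χ' < mu χ :=
            mu_apply hv hg hraw rfl (Or.inr ⟨a, rfl⟩) (by simp) (by simp)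
          obtain ⟨χ'', hrtg, himg, hv'', hpn, hsub, hiff⟩ :=
            ih (mu χ') (lt_of_lt_of_le hlt hmu) χ' le_rfl hv' hM'
          exact ⟨χ'', Relation.ReflTransGen.head ⟨_, hstep⟩ hrtg,
            by rw [himg, image_step_small hstep (by simp)], hv'', hpn,
            (step_hist_mono hstep).trans hsub,
            fun b m' i' => (hiff b m' i').trans (hstore b m' i')⟩
        · refine ⟨χ, Relation.ReflTransGen.refl, rfl, hv, ⟨hg, ?_, ?_⟩, subset_rfl,
            fun _ _ _ => Iff.rfl⟩
          · rintro ⟨d, i⟩ hdi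
            cases d with
            | raw a => exact absurd ⟨a, i, hdi⟩ h2
            | rawDel a => exact absurd ⟨a, i, hdi⟩ h3
            | rep a m => exact ⟨a, m, rfl⟩
          · intro a m₁ m₂ i₁ i₂ h1' h2'
            exact (hv.u1 a m₁ i₁ m₂ i₂ h1' h2').2
    · obtain ⟨c, hc⟩ := Multiset.exists_mem_of_ne_zero hg
      set χ' : CState α := ⟨χ.goal.erase c, insert (c, χ.next) χ.store, χ.hist,
        χ.next + 1⟩ with hχ'
      have hstep : Step P χ .intro χ' := Step.intro χ c hc
      have hv' := inv_step hstep hv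
      have hcshape := hM.1 c hc
      have hstore : ∀ b m' i', ((TC.rep b m', i') ∈ χ'.store ↔ (TC.rep b m', i') ∈ χ.store) := by
        intro b m' i'
        constructor
        · rintro (h | h)
          · obtain ⟨h1, -⟩ := pair_eq h
            rcases hcshape with ⟨a, rfl, -⟩ | ⟨a, rfl, -⟩ <;> cases h1
          · exact h
        · exact fun h => Set.mem_insert_iff.2 (Or.inr h)
      have hM' : Matched χ' := by
        refine ⟨?_, ?_, ?_⟩
        · intro c' hc'
          rcases hM.1 c' (Multiset.mem_of_mem_erase hc') with
            ⟨a, rfl, m', i', hm', hr⟩ | ⟨a, rfl, m', i', hm', hr⟩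
          · exact Or.inl ⟨a, rfl, m', i', hm', (hstore a m' i').2 hr⟩
          · exact Or.inr ⟨a, rfl, m', i', hm', (hstore a m' i').2 hr⟩
        · intro b j' hb
          rcases Set.mem_insert_iff.1 hb with h | h
          · obtain ⟨h1, -⟩ := pair_eq h
            rcases hcshape with ⟨a, rfl, m', i', hm', hr⟩ | ⟨a, rfl, m', i', hm', hr⟩
            · obtain rfl : b = a := by injection h1
              exact ⟨m', i', hm', (hstore b m' i').2 hr⟩
            · cases h1
          · obtain ⟨m', i', hm', hr⟩ := hM.2.1 b j' h
            exact ⟨m', i', hm', (hstore b m' i').2 hr⟩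
        · intro b j' hb
          rcases Set.mem_insert_iff.1 hb with h | h
          · obtain ⟨h1, -⟩ := pair_eq h
            rcases hcshape with ⟨a, rfl, m', i', hm', hr⟩ | ⟨a, rfl, m', i', hm', hr⟩
            · cases h1
            · obtain rfl : b = a := by injection h1
              exact ⟨m', i', hm', (hstore b m' i').2 hr⟩
          · obtain ⟨m', i', hm', hr⟩ := hM.2.2 b j' h
            exact ⟨m', i', hm', (hstore b m' i').2 hr⟩
      obtain ⟨χ'', hrtg, himg, hv'', hpn, hsub, hiff⟩ :=
        ih (mu χ') (lt_of_lt_of_le (mu_intro hv hc) hmu) χ' le_rfl hv' hM'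
      exact ⟨χ'', Relation.ReflTransGen.head ⟨_, hstep⟩ hrtg,
        by rw [himg, image_step_small hstep (by simp)], hv'', hpn,
        (step_hist_mono hstep).trans hsub,
        fun b m' i' => (hiff b m' i').trans (hstore b m' i')⟩

end LA2CHR

namespace LA2CHR

variable {α : Type} [DecidableEq α]

theorem applicable_of_fires {P : Set (Inst α)} {χ : CState α} (hpn : PreNormal χ)
    (hv : Inv χ) {ι : Inst α} {H R : Set (TC α × ℕ)} {B : Multiset (TC α)}
    (hf : Fires P χ (RuleTag.inst ι) H R B) (hconc : ¬ ↑ι.concl ⊆ chrToLa χ) :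
    LAApplicable P (chrToLa χ) ι := by
  cases hf with
  | inst ι fp fn fm hP hpos hneg =>
    refine ⟨hP, ?_, ?_, hconc⟩
    · intro a ha
      have hrep := hpos a ha
      constructor
      · exact (pos_mem_prenormal hpn).2 ⟨Mode.p, fp a, fun h => Mode.noConfusion h, hrep⟩
      · intro hdel
        obtain ⟨m', i', hm', hr⟩ := (del_mem_prenormal hpn).1 hdel
        exact hm' (hv.u1 a m' i' Mode.p (fp a) hr hrep).1
    · intro a ha
      obtain ⟨hfm, hr⟩ := hneg a ha
      exact (del_mem_prenormal hpn).2 ⟨fm a, fn a, hfm, hr⟩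

theorem fires_of_applicable {P : Set (Inst α)} {χ : CState α} (hpn : PreNormal χ)
    {ι : Inst α} (happ : LAApplicable P (chrToLa χ) ι) :
    ∃ H, Fires P χ (RuleTag.inst ι) H ∅ (Multiset.map toTC ι.concl.val) := by
  classical
  obtain ⟨hP, hposA, hnegA, hconc⟩ := happ
  have hpos' : ∀ a ∈ ι.posA, ∃ i, (TC.rep a Mode.p, i) ∈ χ.store := by
    intro a ha
    obtain ⟨m, i, hm, hr⟩ := (pos_mem_prenormal hpn).1 (hposA a ha).1
    have hmB : m ≠ Mode.b := by
      intro h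
      subst h
      exact (hposA a ha).2
        ((del_mem_prenormal hpn).2 ⟨Mode.b, i, fun h => Mode.noConfusion h, hr⟩)
    have hmp : m = Mode.p := by cases m <;> simp_all
    exact ⟨i, hmp ▸ hr⟩
  have hneg' : ∀ a ∈ ι.negA,
      ∃ mi : Mode × ℕ, mi.1 ≠ Mode.p ∧ (TC.rep a mi.1, mi.2) ∈ χ.store := by
    intro a ha
    obtain ⟨m, i, hm, hr⟩ := (del_mem_prenormal hpn).1 (hnegA a ha)
    exact ⟨(m, i), hm, hr⟩
  refine ⟨_, Fires.inst ι
    (fun a => if h : ∃ i, (TC.rep a Mode.p, i) ∈ χ.store then h.choose else 0)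
    (fun a => if h : ∃ mi : Mode × ℕ, mi.1 ≠ Mode.p ∧ (TC.rep a mi.1, mi.2) ∈ χ.store
      then h.choose.2 else 0)
    (fun a => if h : ∃ mi : Mode × ℕ, mi.1 ≠ Mode.p ∧ (TC.rep a mi.1, mi.2) ∈ χ.store
      then h.choose.1 else Mode.n)
    hP ?_ ?_⟩
  · intro a ha
    have h := hpos' a ha
    rw [dif_pos h]
    exact h.choose_spec
  · intro a ha
    have h := hneg' a ha
    simp only [dif_pos h]
    exact ⟨h.choose_spec.1, h.choose_spec.2⟩

/-- The atom of a constraint. -/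
def atomOf : TC α → α
  | .raw a => a
  | .rawDel a => a
  | .rep a _ => a

/-- Atoms having a constraint in the store. -/
def atomsOf (χ : CState α) : Set α := (fun x => atomOf x.1) '' χ.store

theorem chrToLa_finite {χ : CState α} (hv : Inv χ) (hpn : PreNormal χ) :
    (chrToLa χ).Finite := by
  have hatoms : (atomsOf χ).Finite := hv.fin.image _
  refine ((hatoms.image LAAtom.pos).union (hatoms.image LAAtom.del)).subset ?_
  intro x hx
  cases x with
  | pos a =>
    obtain ⟨m, i, -, hr⟩ := (pos_mem_prenormal hpn).1 hx
    exact Or.inl ⟨a, ⟨(TC.rep a m, i), hr, rfl⟩, rfl⟩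
  | del a =>
    obtain ⟨m, i, -, hr⟩ := (del_mem_prenormal hpn).1 hx
    exact Or.inr ⟨a, ⟨(TC.rep a m, i), hr, rfl⟩, rfl⟩

theorem finite_finset_subsets {β : Type*} {A : Set β} (h : A.Finite) :
    {s : Finset β | ↑s ⊆ A}.Finite := by
  have hpre : ((fun s : Finset β => (↑s : Set β)) ⁻¹' {t | t ⊆ A}).Finite :=
    h.finite_subsets.preimage Finset.coe_injective.injOn
  exact hpre.subset fun s hs => hs

/-- The set of "blockers": instance rules with priority below `p₀` that can fire with
a fresh history tuple. -/
def Blk (P : Set (Inst α)) (p₀ : ℕ) (χ : CState α) : Set (Inst α × Set (TC α × ℕ)) :=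
  {x | (∃ R B, Fires P χ (RuleTag.inst x.1) x.2 R B) ∧
    (RuleTag.inst x.1, x.2) ∉ χ.hist ∧ x.1.prio < p₀}

theorem blk_finite {P : Set (Inst α)} {χ : CState α} {p₀ : ℕ} (hv : Inv χ)
    (hpn : PreNormal χ)
    (hmax : ∀ ι', LAApplicable P (chrToLa χ) ι' → p₀ ≤ ι'.prio) :
    (Blk P p₀ χ).Finite := by
  classical
  have hatoms : (atomsOf χ).Finite := hv.fin.image _
  have hsig : (chrToLa χ).Finite := chrToLa_finite hv hpn
  have f1 : (Set.Iio p₀).Finite := Set.finite_Iio _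
  have f2 : ({s : Finset α | ↑s ⊆ atomsOf χ}).Finite := finite_finset_subsets hatoms
  have f4 : ({s : Finset (LAAtom α) | ↑s ⊆ chrToLa χ}).Finite := finite_finset_subsets hsig
  have hJ : ({x : ℕ × Finset α × Finset α × Finset (LAAtom α) |
      x.1 < p₀ ∧ ↑x.2.1 ⊆ atomsOf χ ∧ ↑x.2.2.1 ⊆ atomsOf χ ∧
      ↑x.2.2.2 ⊆ chrToLa χ}).Finite := by
    refine (f1.prod (f2.prod (f2.prod f4))).subset ?_
    rintro ⟨p, s1, s2, s3⟩ ⟨h1, h2, h3, h4⟩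
    exact ⟨h1, h2, h3, h4⟩
  have hinj : Function.Injective
      (fun ι : Inst α => (ι.prio, ι.posA, ι.negA, ι.concl)) := by
    rintro ⟨p1, a1, b1, c1⟩ ⟨p2, a2, b2, c2⟩ h
    simp only [Prod.mk.injEq] at h
    obtain ⟨h1, h2, h3, h4⟩ := h
    subst h1; subst h2; subst h3; subst h4
    rfl
  have hIfin : ({ι : Inst α | ι.prio < p₀ ∧ ↑ι.posA ⊆ atomsOf χ ∧
      ↑ι.negA ⊆ atomsOf χ ∧ ↑ι.concl ⊆ chrToLa χ}).Finite := by
    refine ((hJ.preimage hinj.injOn).subset ?_)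
    intro ι hι
    exact hι
  have hPw : ({H : Set (TC α × ℕ) | H ⊆ χ.store}).Finite := hv.fin.finite_subsets
  refine ((hIfin.prod hPw).subset ?_)
  rintro ⟨ι, H⟩ ⟨⟨R, B, hf⟩, hfr, hplt⟩
  dsimp only at hf hfr hplt
  have hconc : ↑ι.concl ⊆ chrToLa χ := by
    by_contra hnc
    exact absurd (hmax ι (applicable_of_fires hpn hv hf hnc)) (Nat.not_le.2 hplt)
  have hHsub : H ⊆ χ.store := fires_H_sub hf
  cases hf with
  | inst ι fp fn fm hP hpos hneg =>
    refine Set.mem_prod.2 ⟨⟨hplt, ?_, ?_, hconc⟩, hHsub⟩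
    · intro a ha
      exact ⟨(TC.rep a Mode.p, fp a), hpos a (Finset.mem_coe.1 ha), rfl⟩
    · intro a ha
      exact ⟨(TC.rep a (fm a), fn a), (hneg a (Finset.mem_coe.1 ha)).2, rfl⟩

theorem fires_inst_transfer {P : Set (Inst α)} {χ χ' : CState α}
    (hst : ∀ a m i, ((TC.rep a m, i) ∈ χ'.store ↔ (TC.rep a m, i) ∈ χ.store))
    {ι : Inst α} {H R : Set (TC α × ℕ)} {B : Multiset (TC α)}
    (hf : Fires P χ' (RuleTag.inst ι) H R B) : Fires P χ (RuleTag.inst ι) H R B := by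
  cases hf with
  | inst ι fp fn fm hP hpos hneg =>
    exact Fires.inst ι fp fn fm hP (fun a ha => (hst _ _ _).1 (hpos a ha))
      (fun a ha => ⟨(hneg a ha).1, (hst _ _ _).1 (hneg a ha).2⟩)

end LA2CHR

namespace LA2CHR

variable {α : Type} [DecidableEq α]

theorem clearBlockers (P : Set (Inst α)) (p₀ : ℕ) : ∀ n (χ : CState α),
    (Blk P p₀ χ).ncard ≤ n → Inv χ → PreNormal χ →
    (∀ ι', LAApplicable P (chrToLa χ) ι' → p₀ ≤ ι'.prio) →
    ∃ χ', Relation.ReflTransGen (StepAny P) χ χ' ∧ chrToLa χ' = chrToLa χ ∧ Inv χ' ∧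
      PreNormal χ' ∧
      (∀ ι' H' R' B', Fires P χ' (RuleTag.inst ι') H' R' B' →
        (RuleTag.inst ι', H') ∉ χ'.hist → p₀ ≤ ι'.prio) := by
  intro n
  induction n using Nat.strong_induction_on with
  | _ n ih =>
    intro χ hn hv hpn hmax
    by_cases hB : Blk P p₀ χ = ∅
    · refine ⟨χ, Relation.ReflTransGen.refl, rfl, hv, hpn, ?_⟩
      intro ι' H' R' B' hf hfr
      by_contra hlt
      have hmem : (ι', H') ∈ Blk P p₀ χ := ⟨⟨R', B', hf⟩, hfr, Nat.lt_of_not_le hlt⟩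
      rw [hB] at hmem
      exact Set.notMem_empty _ hmem
    · have hfin := blk_finite hv hpn hmax
      have hne : (Blk P p₀ χ).Nonempty := Set.nonempty_iff_ne_empty.2 hB
      have hpne : ((fun x : Inst α × Set (TC α × ℕ) => x.1.prio) '' Blk P p₀ χ).Nonempty :=
        hne.image _
      obtain ⟨x, hxB, hxp⟩ := Nat.sInf_mem hpne
      have hxB' := hxB
      obtain ⟨ι₀, H₀⟩ := x
      have hxmin : ∀ y ∈ Blk P p₀ χ, ι₀.prio ≤ y.1.prio := by
        intro y hy
        have h1 : sInf ((fun x : Inst α × Set (TC α × ℕ) => x.1.prio) '' Blk P p₀ χ)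
            ≤ y.1.prio := Nat.sInf_le ⟨y, hy, rfl⟩
        have hxp' : ι₀.prio = sInf ((fun x : Inst α × Set (TC α × ℕ) => x.1.prio) '' Blk P p₀ χ) := hxp
        exact le_trans (le_of_eq hxp') h1
      obtain ⟨⟨R₀, B₀, hf₀⟩, hfr₀, hplt₀⟩ := hxB
      dsimp only at hf₀ hfr₀ hplt₀
      have hshape : R₀ = ∅ ∧ B₀ = Multiset.map toTC ι₀.concl.val := by
        cases hf₀
        exact ⟨rfl, rfl⟩
      obtain ⟨rfl, rfl⟩ := hshape
      have hg := hpn.1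
      have hconc : ↑ι₀.concl ⊆ chrToLa χ := by
        by_contra hnc
        exact absurd (hmax ι₀ (applicable_of_fires hpn hv hf₀ hnc)) (Nat.not_le.2 hplt₀)
      have hprio : ∀ (t' : RuleTag α) (H' R' : Set (TC α × ℕ)) (B' : Multiset (TC α)),
          Fires P χ t' H' R' B' → (t', H') ∉ χ.hist →
          (RuleTag.inst ι₀).prio ≤ t'.prio := by
        intro t' H' R' B' hf' hfr'
        cases hf' with
        | keepPos a' m' i' j' hm' hrep' hraw' =>
          obtain ⟨b, m, hbm⟩ := hpn.2.1 _ hraw'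
          simp at hbm
        | mergePos a' i' j' hrep' hraw' =>
          obtain ⟨b, m, hbm⟩ := hpn.2.1 _ hraw'
          simp at hbm
        | newPos a' j' hraw' =>
          obtain ⟨b, m, hbm⟩ := hpn.2.1 _ hraw'
          simp at hbm
        | keepNeg a' m' i' j' hm' hrep' hraw' =>
          obtain ⟨b, m, hbm⟩ := hpn.2.1 _ hraw'
          simp at hbm
        | mergeNeg a' i' j' hrep' hraw' =>
          obtain ⟨b, m, hbm⟩ := hpn.2.1 _ hraw'
          simp at hbm
        | newNeg a' j' hraw' =>
          obtain ⟨b, m, hbm⟩ := hpn.2.1 _ hraw'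
          simp at hbm
        | inst ι'' fp fn fm hP hpos hneg =>
          simp only [RuleTag.prio]
          by_cases hb : ι''.prio < p₀
          · have hyB : ((ι'', (fun a => (TC.rep a Mode.p, fp a)) '' ↑ι''.posA ∪
                (fun a => (TC.rep a (fm a), fn a)) '' ↑ι''.negA) :
                Inst α × Set (TC α × ℕ)) ∈ Blk P p₀ χ :=
              ⟨⟨_, _, Fires.inst ι'' fp fn fm hP hpos hneg⟩, hfr', hb⟩
            have hle := hxmin _ hyB
            dsimp only at hle
            omega
          · have h2 := Nat.not_lt.1 hb
            omega
      set χ₁ : CState α := ⟨Multiset.map toTC ι₀.concl.val, χ.store \ ∅,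
        insert (RuleTag.inst ι₀, H₀) χ.hist, χ.next⟩ with hχ₁
      have hstep : Step P χ (Lab.apply (RuleTag.inst ι₀)) χ₁ :=
        Step.apply χ _ H₀ ∅ _ hg hf₀ hfr₀ hprio
      have hv₁ := inv_step hstep hv
      have himg₁ : chrToLa χ₁ = chrToLa χ := by
        rw [image_step_inst hstep]
        exact Set.union_eq_self_of_subset_right hconc
      have hM₁ : Matched χ₁ := by
        refine ⟨?_, ?_, ?_⟩
        · intro c hcgoal
          obtain ⟨y, hy, rfl⟩ := Multiset.mem_map.1 hcgoal
          have hyc : y ∈ chrToLa χ := hconc (Finset.mem_coe.2 (Finset.mem_def.2 hy))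
          cases y with
          | pos a =>
            obtain ⟨m, i, hm, hr⟩ := (pos_mem_prenormal hpn).1 hyc
            exact Or.inl ⟨a, rfl, m, i, hm, ⟨hr, Set.notMem_empty _⟩⟩
          | del a =>
            obtain ⟨m, i, hm, hr⟩ := (del_mem_prenormal hpn).1 hyc
            exact Or.inr ⟨a, rfl, m, i, hm, ⟨hr, Set.notMem_empty _⟩⟩
        · intro b j hb
          obtain ⟨c, m, hcm⟩ := hpn.2.1 _ hb.1
          simp at hcm
        · intro b j hb
          obtain ⟨c, m, hcm⟩ := hpn.2.1 _ hb.1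
          simp at hcm
      obtain ⟨χ₂, hrtg₂, himg₂, hv₂, hpn₂, hsub₂, hiff₂⟩ :=
        renorm P (mu χ₁) χ₁ le_rfl hv₁ hM₁
      have hstiff : ∀ a m i, ((TC.rep a m, i) ∈ χ₂.store ↔ (TC.rep a m, i) ∈ χ.store) := by
        intro a m i
        rw [hiff₂ a m i]
        exact ⟨fun h => h.1, fun h => ⟨h, Set.notMem_empty _⟩⟩
      have himg : chrToLa χ₂ = chrToLa χ := by rw [himg₂, himg₁]
      have hBsub : Blk P p₀ χ₂ ⊆ Blk P p₀ χ \ {(ι₀, H₀)} := by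
        rintro ⟨ι', H'⟩ ⟨⟨R', B', hf'⟩, hfr', hp'⟩
        dsimp only at hf' hfr' hp'
        have hxmem : (RuleTag.inst ι₀, H₀) ∈ χ₂.hist := hsub₂ (Set.mem_insert _ _)
        constructor
        · exact ⟨⟨R', B', fires_inst_transfer hstiff hf'⟩,
            fun h => hfr' (hsub₂ (Set.mem_insert_iff.2 (Or.inr h))), hp'⟩
        · intro heq
          rw [Set.mem_singleton_iff] at heq
          obtain ⟨h1, h2⟩ := pair_eq heq
          subst h1
          subst h2
          exact hfr' hxmem
      have hcard : (Blk P p₀ χ₂).ncard < n := by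
        have h1 : (Blk P p₀ χ₂).ncard ≤ (Blk P p₀ χ \ {(ι₀, H₀)}).ncard :=
          Set.ncard_le_ncard hBsub hfin.diff
        have h2 : (Blk P p₀ χ \ {(ι₀, H₀)}).ncard < (Blk P p₀ χ).ncard :=
          Set.ncard_diff_singleton_lt_of_mem hxB' hfin
        omega
      obtain ⟨χ₃, hrtg₃, himg₃, hv₃, hpn₃, hfinal⟩ :=
        ih _ hcard χ₂ le_rfl hv₂ hpn₂ (by rw [himg]; exact hmax)
      exact ⟨χ₃, (Relation.ReflTransGen.head ⟨_, hstep⟩ hrtg₂).trans hrtg₃,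
        by rw [himg₃, himg], hv₃, hpn₃, hfinal⟩

end LA2CHR

namespace LA2CHR

variable {α : Type} [DecidableEq α]

theorem step_inst_to_LAStep {P : Set (Inst α)} {χ χ' : CState α} {ι : Inst α}
    (hv : Inv χ) (hstep : Step P χ (Lab.apply (RuleTag.inst ι)) χ')
    (hnc : ¬ ↑ι.concl ⊆ chrToLa χ) :
    LAStep P (chrToLa χ) (chrToLa χ') := by
  have hstep' := hstep
  have himg := image_step_inst hstep
  cases hstep with
  | apply t H R B hg hf hh hp =>
    cases hf with
    | inst ι fp fn fm hP hpos hneg =>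
      refine ⟨ι, ⟨hP, ?_, ?_, hnc⟩, himg, ?_⟩
      · -- positive antecedents
        intro a ha
        have hrep := hpos a ha
        constructor
        · exact mem_chrToLa_pos.2 (Or.inr ⟨Mode.p, fun h => Mode.noConfusion h,
            memA_of_store hrep⟩)
        · intro hdel
          rw [mem_chrToLa_del] at hdel
          rcases hdel with h | ⟨m', hm', h⟩
          · obtain ⟨j, hj⟩ := (memA_goal0 hg).1 h
            have hfresh : (RuleTag.mergeNeg,
                ({(TC.rep a Mode.p, fp a), (TC.rawDel a, j)} : Set (TC α × ℕ))) ∉ χ.hist :=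
              fresh_of_raw_in_store hv (Set.mem_insert_iff.2 (Or.inr rfl))
                (Or.inr ⟨a, rfl⟩) hj
            have := hp _ _ _ _ (Fires.mergeNeg a (fp a) j hrep hj) hfresh
            simp [RuleTag.prio] at this
          · obtain ⟨j, hj⟩ := (memA_goal0 hg).1 h
            exact hm' (hv.u1 a m' j Mode.p (fp a) hj hrep).1
      · -- negative antecedents
        intro a ha
        obtain ⟨hfm, hr⟩ := hneg a ha
        exact mem_chrToLa_del.2 (Or.inr ⟨fm a, hfm, memA_of_store hr⟩)
      · -- priority maximality
        by_cases h0 : ι.prio = 0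
        · intro ι' _
          rw [h0]
          exact Nat.zero_le _
        · have hnoraw : ∀ b j, (TC.raw b, j) ∉ χ.store := by
            intro b j hb
            by_cases hrep' : ∃ m i, (TC.rep b m, i) ∈ χ.store
            · obtain ⟨m, i, hmi⟩ := hrep'
              by_cases hmn : m = Mode.n
              · subst hmn
                have := hp _ _ _ _ (Fires.mergePos b i j hmi hb)
                  (fresh_of_raw_in_store hv (Set.mem_insert_iff.2 (Or.inr rfl))
                    (Or.inl ⟨b, rfl⟩) hb)
                simp [RuleTag.prio] at this
              · have := hp _ _ _ _ (Fires.keepPos b m i j hmn hmi hb)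
                  (fresh_of_raw_in_store hv (Set.mem_insert_iff.2 (Or.inr rfl))
                    (Or.inl ⟨b, rfl⟩) hb)
                simp [RuleTag.prio] at this
            · have := hp _ _ _ _ (Fires.newPos b j hb)
                (fresh_of_raw_in_store hv rfl (Or.inl ⟨b, rfl⟩) hb)
              simp [RuleTag.prio] at this
              omega
          have hnodel : ∀ b j, (TC.rawDel b, j) ∉ χ.store := by
            intro b j hb
            by_cases hrep' : ∃ m i, (TC.rep b m, i) ∈ χ.store
            · obtain ⟨m, i, hmi⟩ := hrep'
              by_cases hmp : m = Mode.p
              · subst hmp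
                have := hp _ _ _ _ (Fires.mergeNeg b i j hmi hb)
                  (fresh_of_raw_in_store hv (Set.mem_insert_iff.2 (Or.inr rfl))
                    (Or.inr ⟨b, rfl⟩) hb)
                simp [RuleTag.prio] at this
              · have := hp _ _ _ _ (Fires.keepNeg b m i j hmp hmi hb)
                  (fresh_of_raw_in_store hv (Set.mem_insert_iff.2 (Or.inr rfl))
                    (Or.inr ⟨b, rfl⟩) hb)
                simp [RuleTag.prio] at this
            · have := hp _ _ _ _ (Fires.newNeg b j hb)
                (fresh_of_raw_in_store hv rfl (Or.inr ⟨b, rfl⟩) hb)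
              simp [RuleTag.prio] at this
              omega
          have hpn : PreNormal χ := by
            refine ⟨hg, ?_, ?_⟩
            · rintro ⟨d, i⟩ hdi
              cases d with
              | raw b => exact absurd hdi (hnoraw b i)
              | rawDel b => exact absurd hdi (hnodel b i)
              | rep b m => exact ⟨b, m, rfl⟩
            · intro b m₁ m₂ i₁ i₂ h1 h2
              exact (hv.u1 b m₁ i₁ m₂ i₂ h1 h2).2
          intro ι' happ'
          obtain ⟨H', hf'⟩ := fires_of_applicable hpn happ'
          have hfresh' : (RuleTag.inst ι', H') ∉ χ.hist :=
            fun hmem => happ'.2.2.2 (hv.hC ι' H' hmem)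
          have := hp _ _ _ _ hf' hfresh'
          simp [RuleTag.prio] at this
          exact this

open LA2CHR in
theorem main_bisim {α : Type} [DecidableEq α] (P : Set (Inst α)) :
    IsWeakBisim (LaLts P) (ChrLts P)
      (fun p q => p = q ∧ q ∈ {x | ∃ χ, Reachable P χ ∧ chrToLa χ = x}) := by
  refine ⟨?_, ?_, ?_, ?_⟩
  · -- τ step on LA side: impossible
    rintro p q p' ⟨rfl, hq⟩ ⟨-, hnone⟩
    exact absurd hnone (by simp)
  · -- visible LA step, simulated by CHR
    rintro p q p' a ⟨rfl, χ, hreach, hcq⟩ ⟨⟨ι, happ, hp'def, hmax⟩, haeq⟩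
    obtain rfl : a = p' \ p := by injection haeq
    have hv := inv_reachable hreach
    obtain ⟨χ₁, hrtg₁, himg₁, hv₁, hpn₁, -⟩ := normalize P (mu χ) χ le_rfl hv
    have himg₁q : chrToLa χ₁ = p := by rw [himg₁, hcq]
    have hmax₁ : ∀ ι', LAApplicable P (chrToLa χ₁) ι' → ι.prio ≤ ι'.prio := by
      rw [himg₁q]; exact hmax
    obtain ⟨χ₂, hrtg₂, himg₂, hv₂, hpn₂, hnoblk⟩ :=
      clearBlockers P ι.prio ((Blk P ι.prio χ₁).ncard) χ₁ le_rfl hv₁ hpn₁ hmax₁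
    have himg₂q : chrToLa χ₂ = p := by rw [himg₂, himg₁q]
    have hreach₂ : Reachable P χ₂ := reachable_rtg (reachable_rtg hreach hrtg₁) hrtg₂
    have happ₂ : LAApplicable P (chrToLa χ₂) ι := by rw [himg₂q]; exact happ
    obtain ⟨H, hf⟩ := fires_of_applicable hpn₂ happ₂
    have hfresh : (RuleTag.inst ι, H) ∉ χ₂.hist :=
      fun hmem => happ₂.2.2.2 (hv₂.hC ι H hmem)
    have hprio : ∀ (t' : RuleTag α) (H' R' : Set (TC α × ℕ)) (B' : Multiset (TC α)),
        Fires P χ₂ t' H' R' B' → (t', H') ∉ χ₂.hist →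
        (RuleTag.inst ι).prio ≤ t'.prio := by
      intro t' H' R' B' hf' hfr'
      cases hf' with
      | keepPos a' m' i' j' hm' hrep' hraw' =>
        obtain ⟨b, m, hbm⟩ := hpn₂.2.1 _ hraw'; simp at hbm
      | mergePos a' i' j' hrep' hraw' =>
        obtain ⟨b, m, hbm⟩ := hpn₂.2.1 _ hraw'; simp at hbm
      | newPos a' j' hraw' =>
        obtain ⟨b, m, hbm⟩ := hpn₂.2.1 _ hraw'; simp at hbm
      | keepNeg a' m' i' j' hm' hrep' hraw' =>
        obtain ⟨b, m, hbm⟩ := hpn₂.2.1 _ hraw'; simp at hbm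
      | mergeNeg a' i' j' hrep' hraw' =>
        obtain ⟨b, m, hbm⟩ := hpn₂.2.1 _ hraw'; simp at hbm
      | newNeg a' j' hraw' =>
        obtain ⟨b, m, hbm⟩ := hpn₂.2.1 _ hraw'; simp at hbm
      | inst ι'' fp fn fm hP hpos hneg =>
        have := hnoblk ι'' _ _ _ (Fires.inst ι'' fp fn fm hP hpos hneg) hfr'
        simp [RuleTag.prio]
        omega
    set χ₃ : CState α := ⟨Multiset.map toTC ι.concl.val, χ₂.store \ ∅,
      insert (RuleTag.inst ι, H) χ₂.hist, χ₂.next⟩ with hχ₃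
    have hstep : Step P χ₂ (Lab.apply (RuleTag.inst ι)) χ₃ :=
      Step.apply χ₂ _ H ∅ _ hpn₂.1 hf hfresh hprio
    have himg₃ : chrToLa χ₃ = p' := by
      rw [image_step_inst hstep, himg₂q, hp'def]
    have hdiff : chrToLa χ₃ \ chrToLa χ₂ = p' \ p := by rw [himg₃, himg₂q]
    have hdne : chrToLa χ₃ \ chrToLa χ₂ ≠ ∅ := by
      rw [hdiff, hp'def]
      obtain ⟨x, hx1, hx2⟩ := Set.not_subset.1 happ.2.2.2
      exact Set.nonempty_iff_ne_empty.1 ⟨x, Or.inr hx1, hx2⟩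
    refine ⟨p, p', p', Relation.ReflTransGen.refl, ?_, Relation.ReflTransGen.refl,
      rfl, χ₃, reachable_step hreach₂ hstep, himg₃⟩
    exact ⟨χ₂, χ₃, hreach₂, ⟨_, hstep⟩, himg₂q, himg₃,
      fun h => absurd h hdne, fun _ => by rw [hdiff]⟩
  · -- τ step on CHR side
    rintro p q q' ⟨rfl, hq⟩ ⟨χ, χ', hreach, ⟨l, hl⟩, hcq, hcq', hno, hyes⟩
    have hdiff : chrToLa χ' \ chrToLa χ = ∅ := by
      by_contra h
      simpa using hyes h
    have hqq' : q' = p := by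
      rw [← hcq, ← hcq']
      exact Set.Subset.antisymm (Set.diff_eq_empty.1 hdiff) (image_mono hl)
    exact ⟨p, Relation.ReflTransGen.refl, by rw [hqq'],
      by rw [hqq'] at hcq' ⊢; exact ⟨χ', reachable_step hreach hl, hcq'⟩⟩
  · -- visible CHR step, simulated by LA
    rintro p q q' a ⟨rfl, hq⟩ ⟨χ, χ', hreach, ⟨l, hl⟩, hcq, hcq', hno, hyes⟩
    have hdne : chrToLa χ' \ chrToLa χ ≠ ∅ := by
      intro h
      simpa using hno h
    obtain rfl : a = chrToLa χ' \ chrToLa χ := by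
      have h5 := hyes hdne
      injection h5
    have hv := inv_reachable hreach
    rcases l with _ | t
    · exact absurd (by rw [image_step_small hl (by simp)]; exact Set.diff_self) hdne
    · cases t with
      | keepPos => exact absurd (by rw [image_step_small hl (by simp)]; exact Set.diff_self) hdne
      | mergePos => exact absurd (by rw [image_step_small hl (by simp)]; exact Set.diff_self) hdne
      | newPos => exact absurd (by rw [image_step_small hl (by simp)]; exact Set.diff_self) hdne
      | keepNeg => exact absurd (by rw [image_step_small hl (by simp)]; exact Set.diff_self) hdne
      | mergeNeg => exact absurd (by rw [image_step_small hl (by simp)]; exact Set.diff_self) hdne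
      | newNeg => exact absurd (by rw [image_step_small hl (by simp)]; exact Set.diff_self) hdne
      | inst ι =>
        have hnc : ¬ ↑ι.concl ⊆ chrToLa χ := by
          intro hsub
          apply hdne
          rw [image_step_inst hl, Set.union_eq_self_of_subset_right hsub]
          exact Set.diff_self
        have hla : LAStep P (chrToLa χ) (chrToLa χ') := step_inst_to_LAStep hv hl hnc
        refine ⟨p, chrToLa χ', chrToLa χ', Relation.ReflTransGen.refl, ?_,
          Relation.ReflTransGen.refl, by rw [hcq'],
          χ', reachable_step hreach hl, hcq'⟩
        rw [← hcq]
        exact ⟨hla, rfl⟩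

end LA2CHR
open LA2CHR in
/-- Let `S₁` be the set of (all) Logical Algorithms states of `P` and `S₂` the set of
`chrToLa`-images of the CHR^rp states of `T(P)` reachable from initial states
`⟨G, ∅, true, ∅⟩₁` with `G` an LA state.  With LA transitions labeled by the state
change and CHR^rp transitions labeled by the change of the `chrToLa`-image (silent if
there is no change), the equality relation between `S₁` and `S₂` is a weak
bisimulation. -/
theorem equality_is_weak_bisimulation {α : Type} [DecidableEq α] (P : Set (Inst α)) :
    IsWeakBisim (LaLts P) (ChrLts P)
      (fun p q => p = q ∧ q ∈ {x | ∃ χ, Reachable P χ ∧ chrToLa χ = x}) := by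
  exact main_bisim P
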